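/- No finite-range extrapolation is sound on the automaton A_bug: (i) no configuration (q7, v) is reachable in A_bug; (ii) for every extrapolation operator extra with finite range, every extra-saturated set N of symbolic states of A_bug fails soundness, i.e., there exists (q, Z) ∈ N such that for all v ∈ Z, the configuration (q, v) is not reachable in A_bug. -/

import Mathlib

open Classical

namespace Timed

/-- A clock valuation assigns a nonnegative real to every clock. -/
abbrev Val (X : Type) := X → NNReal

/-- Time elapse on valuations: `(v+δ)(x) = v(x)+δ`. -/
noncomputable def addVal {X : Type} (v : Val X) (δ : NNReal) : Val X := fun x => v x + δ

/-- Reset of the clocks in `Y` to `0`. -/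
noncomputable def resetVal {X : Type} (Y : Set X) (v : Val X) : Val X :=
  fun x => if x ∈ Y then 0 else v x

/-- Comparison operators `<, ≤, =, ≥, >`. -/
inductive CmpOp | lt | le | eq | ge | gt

def CmpOp.holds : CmpOp → ℝ → ℝ → Prop
  | .lt, a, b => a < b
  | .le, a, b => a ≤ b
  | .eq, a, b => a = b
  | .ge, a, b => a ≥ b
  | .gt, a, b => a > b

/-- Clock constraints: finite conjunctions of `x ⋈ c` and `x - y ⋈ c` (and `true`). -/
inductive ClockConstraint (X : Type) where
  | tt : ClockConstraint X
  | single : X → CmpOp → ℤ → ClockConstraint X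
  | diag : X → X → CmpOp → ℤ → ClockConstraint X
  | conj : ClockConstraint X → ClockConstraint X → ClockConstraint X

def ClockConstraint.sat {X : Type} (v : Val X) : ClockConstraint X → Prop
  | .tt => True
  | .single x op c => op.holds (v x : ℝ) (c : ℝ)
  | .diag x y op c => op.holds ((v x : ℝ) - (v y : ℝ)) (c : ℝ)
  | .conj g₁ g₂ => g₁.sat v ∧ g₂.sat v

/-- `⟦g⟧`, the set of valuations satisfying `g`. -/
def sem {X : Type} (g : ClockConstraint X) : Set (Val X) := {v | g.sat v}

/-- A zone is a set of valuations definable by a clock constraint. -/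
def IsZone {X : Type} (Z : Set (Val X)) : Prop := ∃ g : ClockConstraint X, Z = sem g

/-- Future (time elapse) of a set of valuations. -/
def future {X : Type} (W : Set (Val X)) : Set (Val X) :=
  {w | ∃ v ∈ W, ∃ δ : NNReal, w = addVal v δ}

/-- Reset of a set of valuations: `[Y]W`. -/
def resetSet {X : Type} (Y : Set X) (W : Set (Val X)) : Set (Val X) :=
  resetVal Y '' W

/-- A timed automaton `(Q, X, q₀, T, F)`. -/
structure Automaton (Q X : Type) where
  init : Q
  trans : Set (Q × ClockConstraint X × Set X × Q)
  final : Set Q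

/-- `Post_t(W) = {v' : ∃ v ∈ W, ∃ δ ≥ 0, v ⊨ g ∧ v' = [Y]v + δ}` for `t = (q,g,Y,q')`. -/
def Post {Q X : Type} (t : Q × ClockConstraint X × Set X × Q) (W : Set (Val X)) :
    Set (Val X) :=
  {w | ∃ v ∈ W, ∃ δ : NNReal, t.2.1.sat v ∧ w = addVal (resetVal t.2.2.1 v) δ}

/-- The zero valuation. -/
def zeroVal (X : Type) : Val X := fun _ => 0

/-- One step of the semantics: a time elapse or a discrete transition. -/
inductive Step {Q X : Type} (A : Automaton Q X) : (Q × Val X) → (Q × Val X) → Prop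
  | delay (q : Q) (v : Val X) (δ : NNReal) : Step A (q, v) (q, addVal v δ)
  | disc {q : Q} {v : Val X} {g : ClockConstraint X} {R : Set X} {q₁ : Q}
      (ht : (q, g, R, q₁) ∈ A.trans) (hg : g.sat v) :
      Step A (q, v) (q₁, resetVal R v)

/-- A configuration is reachable if some finite run from `(q₀, 0)` ends in it. -/
def Reachable {Q X : Type} (A : Automaton Q X) (c : Q × Val X) : Prop :=
  Relation.ReflTransGen (Step A) (A.init, zeroVal X) c

/-- The initial zone `Z₀ = future {0}`. -/
def initZone (X : Type) : Set (Val X) := future {zeroVal X}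

/-- The set `S` of reachable symbolic states: least set containing `(q₀, Z₀)` and
closed under nonempty `Post`. -/
inductive SymbReach {Q X : Type} (A : Automaton Q X) : Q × Set (Val X) → Prop
  | init : SymbReach A (A.init, initZone X)
  | step {q : Q} {Z : Set (Val X)} {g : ClockConstraint X} {Y : Set X} {q' : Q}
      (h : SymbReach A (q, Z)) (ht : (q, g, Y, q') ∈ A.trans)
      (hne : Post (q, g, Y, q') Z ≠ ∅) :
      SymbReach A (q', Post (q, g, Y, q') Z)

/-- `N` is saturated w.r.t. the extrapolation operator `extra`. -/
def ExtraSaturated {Q X : Type} (A : Automaton Q X)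
    (extra : Q → Set (Val X) → Set (Val X)) (N : Set (Q × Set (Val X))) : Prop :=
  (∃ Z'', (A.init, Z'') ∈ N ∧ extra A.init (initZone X) ⊆ Z'') ∧
  ∀ q Z, (q, Z) ∈ N → ∀ g Y q', (q, g, Y, q') ∈ A.trans →
    Post (q, g, Y, q') Z ≠ ∅ →
    ∃ Z'', (q', Z'') ∈ N ∧ extra q' (Post (q, g, Y, q') Z) ⊆ Z''

/-- A `K`-bounded clock constraint: every `x ⋈ c` has `-K x ≤ c ≤ K x` and
every `x - y ⋈ c` has `-K y ≤ c ≤ K x`. -/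
def KBounded {X : Type} (K : X → ℕ) : ClockConstraint X → Prop
  | .tt => True
  | .single x _ c => -(K x : ℤ) ≤ c ∧ c ≤ (K x : ℤ)
  | .diag x y _ c => -(K y : ℤ) ≤ c ∧ c ≤ (K x : ℤ)
  | .conj g₁ g₂ => KBounded K g₁ ∧ KBounded K g₂

/-- A `K`-bounded zone. -/
def IsKBoundedZone {X : Type} (K : X → ℕ) (Z : Set (Val X)) : Prop :=
  ∃ g : ClockConstraint X, KBounded K g ∧ Z = sem g

/-- An `LU`-bounded clock constraint: every `x ⋈ c` has `-U x ≤ c ≤ L x` and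
every `x - y ⋈ c` has `-U y ≤ c ≤ L x`. -/
def LUBounded {X : Type} (L U : X → ℕ) : ClockConstraint X → Prop
  | .tt => True
  | .single x _ c => -(U x : ℤ) ≤ c ∧ c ≤ (L x : ℤ)
  | .diag x y _ c => -(U y : ℤ) ≤ c ∧ c ≤ (L x : ℤ)
  | .conj g₁ g₂ => LUBounded L U g₁ ∧ LUBounded L U g₂

/-- An `LU`-bounded zone. -/
def IsLUBoundedZone {X : Type} (L U : X → ℕ) (Z : Set (Val X)) : Prop :=
  ∃ g : ClockConstraint X, LUBounded L U g ∧ Z = sem g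

/-- A diagonal-free clock constraint. -/
def DiagFree {X : Type} : ClockConstraint X → Prop
  | .tt => True
  | .single _ _ _ => True
  | .diag _ _ _ _ => False
  | .conj g₁ g₂ => DiagFree g₁ ∧ DiagFree g₂

/-- Every atomic constraint `x ⋈ c` of the guard satisfies `c ≤ K x`. -/
def GuardKBounded {X : Type} (K : X → ℕ) : ClockConstraint X → Prop
  | .tt => True
  | .single x _ c => c ≤ (K x : ℤ)
  | .diag _ _ _ _ => True
  | .conj g₁ g₂ => GuardKBounded K g₁ ∧ GuardKBounded K g₂

/-- `LU`-boundedness of guards: `x < c`, `x ≤ c` need `c ≤ U x`; `x > d`, `x ≥ d`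
need `d ≤ L x`; `x = c` needs both. -/
def GuardLUBounded {X : Type} (L U : X → ℕ) : ClockConstraint X → Prop
  | .tt => True
  | .single x op c =>
      match op with
      | .lt => c ≤ (U x : ℤ)
      | .le => c ≤ (U x : ℤ)
      | .gt => c ≤ (L x : ℤ)
      | .ge => c ≤ (L x : ℤ)
      | .eq => c ≤ (U x : ℤ) ∧ c ≤ (L x : ℤ)
  | .diag _ _ _ _ => True
  | .conj g₁ g₂ => GuardLUBounded L U g₁ ∧ GuardLUBounded L U g₂

/-- A (strong timed) simulation: a preorder relating only configurations with the same
state, compatible with time elapses and discrete transitions. -/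
def IsSimulation {Q X : Type} (A : Automaton Q X)
    (R : (Q × Val X) → (Q × Val X) → Prop) : Prop :=
  (∀ c, R c c) ∧
  (∀ c₁ c₂ c₃, R c₁ c₂ → R c₂ c₃ → R c₁ c₃) ∧
  (∀ c c', R c c' → c.1 = c'.1) ∧
  (∀ q v v', R (q, v) (q, v') →
    (∀ δ : NNReal, R (q, addVal v δ) (q, addVal v' δ)) ∧
    (∀ g Y q₁, (q, g, Y, q₁) ∈ A.trans → g.sat v →
      g.sat v' ∧ R (q₁, resetVal Y v) (q₁, resetVal Y v')))

/-- Labels of run steps: a delay, or a discrete transition. -/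
inductive RunLabel (Q X : Type) where
  | delay : NNReal → RunLabel Q X
  | disc : Q × ClockConstraint X × Set X × Q → RunLabel Q X

/-- Finite runs with an explicit sequence of delays and transitions. -/
inductive LRun {Q X : Type} (A : Automaton Q X) :
    (Q × Val X) → List (RunLabel Q X) → (Q × Val X) → Prop
  | refl (c : Q × Val X) : LRun A c [] c
  | delay {q : Q} {v : Val X} (δ : NNReal) {l : List (RunLabel Q X)} {c' : Q × Val X}
      (h : LRun A (q, addVal v δ) l c') : LRun A (q, v) (RunLabel.delay δ :: l) c'
  | disc {q : Q} {v : Val X} {g : ClockConstraint X} {Y : Set X} {q₁ : Q}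
      {l : List (RunLabel Q X)} {c' : Q × Val X}
      (ht : (q, g, Y, q₁) ∈ A.trans) (hg : g.sat v)
      (h : LRun A (q₁, resetVal Y v) l c') :
      LRun A (q, v) (RunLabel.disc (q, g, Y, q₁) :: l) c'

/-- `N` is saturated w.r.t. the simulation `R`. -/
def SimSaturated {Q X : Type} (A : Automaton Q X)
    (R : (Q × Val X) → (Q × Val X) → Prop) (N : Set (Q × Set (Val X))) : Prop :=
  (∃ Z'', (A.init, Z'') ∈ N ∧ ∀ v ∈ initZone X, ∃ v' ∈ Z'', R (A.init, v) (A.init, v')) ∧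
  ∀ q Z, (q, Z) ∈ N → ∀ g Y q', (q, g, Y, q') ∈ A.trans →
    Post (q, g, Y, q') Z ≠ ∅ →
    ∃ Z'', (q', Z'') ∈ N ∧ ∀ v ∈ Post (q, g, Y, q') Z, ∃ v' ∈ Z'', R (q', v) (q', v')

/-- Atomic constraints, allowing the zero clock `x₀` on the left of a difference. -/
inductive Atom (X : Type) where
  | single : X → CmpOp → ℤ → Atom X
  | negSingle : X → CmpOp → ℤ → Atom X    -- `x₀ - y ⋈ c`
  | diag : X → X → CmpOp → ℤ → Atom X

def Atom.sat {X : Type} (v : Val X) : Atom X → Prop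
  | .single x op c => op.holds (v x : ℝ) (c : ℝ)
  | .negSingle y op c => op.holds (-(v y : ℝ)) (c : ℝ)
  | .diag x y op c => op.holds ((v x : ℝ) - (v y : ℝ)) (c : ℝ)

/-- `pre(φ, Y)` of an atomic constraint w.r.t. a reset set `Y`. -/
noncomputable def preAtom {X : Type} (Y : Set X) : Atom X → Set (Atom X)
  | .single x op c => if x ∈ Y then ∅ else {Atom.single x op c}
  | .negSingle y op c => if y ∈ Y then ∅ else {Atom.negSingle y op c}
  | .diag x y op c =>
      if x ∈ Y then (if y ∈ Y then ∅ else {Atom.negSingle y op c})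
      else (if y ∈ Y then {Atom.single x op c} else {Atom.diag x y op c})

/-- The set of atomic constraints of a guard. -/
def atomsOf {X : Type} : ClockConstraint X → Set (Atom X)
  | .tt => ∅
  | .single x op c => {Atom.single x op c}
  | .diag x y op c => {Atom.diag x y op c}
  | .conj g₁ g₂ => atomsOf g₁ ∪ atomsOf g₂

/-- One step of the fixpoint equations defining the constraint map `G`. -/
noncomputable def cmapStep {Q X : Type} (A : Automaton Q X)
    (G : Q → Set (Atom X)) (q : Q) : Set (Atom X) :=
  {φ | ∃ g Y q', (q, g, Y, q') ∈ A.trans ∧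
        (φ ∈ atomsOf g ∨ ∃ ψ ∈ G q', φ ∈ preAtom Y ψ)}

/-- The `G`-preorder: `(q,v) ≼_G (q,v')` iff for all `δ` and all `φ ∈ G q`,
`v+δ ⊨ φ` implies `v'+δ ⊨ φ` (only configurations with the same state are related). -/
def GPre {Q X : Type} (G : Q → Set (Atom X)) (c c' : Q × Val X) : Prop :=
  c.1 = c'.1 ∧
  ∀ δ : NNReal, ∀ φ ∈ G c.1, Atom.sat (addVal c.2 δ) φ → Atom.sat (addVal c'.2 δ) φ

end Timed
open Timed

/-- The automaton `A_bug` of Figure 3, over clocks `x1, x2, x3, x4` (indices `0..3`)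
and states `q0, …, q7` (indices `0..7`). -/
def Abug : Automaton (Fin 8) (Fin 4) where
  init := 0
  trans :=
    {(0, ClockConstraint.single 2 CmpOp.le 3, ({0, 2} : Set (Fin 4)), 1),
     (1, ClockConstraint.single 1 CmpOp.eq 3, ({1} : Set (Fin 4)), 2),
     (2, ClockConstraint.single 0 CmpOp.eq 2, ({0} : Set (Fin 4)), 3),
     (3, ClockConstraint.single 1 CmpOp.eq 2, ({1} : Set (Fin 4)), 2),
     (2, ClockConstraint.single 0 CmpOp.eq 2, ({0} : Set (Fin 4)), 4),
     (4, ClockConstraint.single 1 CmpOp.eq 2, ({1} : Set (Fin 4)), 5),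
     (5, ClockConstraint.single 0 CmpOp.eq 3, ({0} : Set (Fin 4)), 6),
     (6, ClockConstraint.conj (ClockConstraint.diag 1 0 CmpOp.gt 2)
           (ClockConstraint.diag 3 2 CmpOp.lt 2), (∅ : Set (Fin 4)), 7)}
  final := {7}


namespace FM

structure DAtom where
  i : ℕ
  j : ℕ
  s : Bool
  c : ℤ

def DAtom.sat (ρ : ℕ → ℝ) (a : DAtom) : Prop :=
  if a.s then ρ a.i - ρ a.j < (a.c : ℝ) else ρ a.i - ρ a.j ≤ (a.c : ℝ)

def SysSat (ρ : ℕ → ℝ) (L : List DAtom) : Prop := ∀ a ∈ L, a.sat ρ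

def elim (k : ℕ) (L : List DAtom) : List DAtom :=
  (L.filter (fun a => a.i ≠ k ∧ a.j ≠ k)) ++
  ((L.filter (fun a => a.i = k ∧ a.j = k)).map (fun a => ⟨0, 0, a.s, a.c⟩)) ++
  ((L.filter (fun a => a.j = k ∧ a.i ≠ k)).flatMap (fun lo =>
    (L.filter (fun a => a.i = k ∧ a.j ≠ k)).map
      (fun up => ⟨lo.i, up.j, lo.s || up.s, lo.c + up.c⟩)))

lemma sat_congr {ρ ρ' : ℕ → ℝ} {a : DAtom} (hi : ρ a.i = ρ' a.i) (hj : ρ a.j = ρ' a.j) :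
    a.sat ρ ↔ a.sat ρ' := by
  unfold DAtom.sat; rw [hi, hj]

/-- helper max lemmas -/
lemma mem_le_foldr_max (l : List ℝ) (a : ℝ) : ∀ x ∈ l, x ≤ l.foldr max a := by
  induction l with
  | nil => simp
  | cons y ys ih =>
    intro x hx
    rcases List.mem_cons.1 hx with rfl | hx
    · exact le_max_left _ _
    · exact le_trans (ih x hx) (le_max_right _ _)

lemma seed_le_foldr_max (l : List ℝ) (a : ℝ) : a ≤ l.foldr max a := by
  induction l with
  | nil => simp
  | cons y ys ih => exact le_trans ih (le_max_right _ _)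

lemma foldr_max_attained (l : List ℝ) (a : ℝ) : l.foldr max a = a ∨ l.foldr max a ∈ l := by
  induction l with
  | nil => simp
  | cons y ys ih =>
    rcases max_choice y (ys.foldr max a) with h | h
    · right; simp [h]
    · rcases ih with h' | h'
      · left; simpa [h] using h'
      · right; simp only [List.foldr, h]; exact List.mem_cons_of_mem _ h'

lemma mem_foldr_min_le (l : List ℝ) (a : ℝ) : ∀ x ∈ l, l.foldr min a ≤ x := by
  induction l with
  | nil => simp
  | cons y ys ih =>
    intro x hx
    rcases List.mem_cons.1 hx with rfl | hx
    · exact min_le_left _ _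
    · exact le_trans (min_le_right _ _) (ih x hx)

lemma foldr_min_le_seed (l : List ℝ) (a : ℝ) : l.foldr min a ≤ a := by
  induction l with
  | nil => simp
  | cons y ys ih => exact le_trans (min_le_right _ _) ih

lemma foldr_min_attained (l : List ℝ) (a : ℝ) : l.foldr min a = a ∨ l.foldr min a ∈ l := by
  induction l with
  | nil => simp
  | cons y ys ih =>
    rcases min_choice y (ys.foldr min a) with h | h
    · right; simp [h]
    · rcases ih with h' | h'
      · left; simpa [h] using h'
      · right; simp only [List.foldr, h]; exact List.mem_cons_of_mem _ h'

/-- Separation lemma: given lower bounds `Lo` and upper bounds `Up` (with strictness flags)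
pairwise compatible, there is a real separating them. -/
lemma exists_sep (Lo Up : List (ℝ × Bool))
    (h : ∀ p ∈ Lo, ∀ q ∈ Up, if p.2 || q.2 then p.1 < q.1 else p.1 ≤ q.1) :
    ∃ r : ℝ, (∀ p ∈ Lo, if p.2 then p.1 < r else p.1 ≤ r) ∧
      (∀ q ∈ Up, if q.2 then r < q.1 else r ≤ q.1) := by
  cases Up with
  | nil =>
    refine ⟨(Lo.map Prod.fst).foldr max 0 + 1, fun p hp => ?_, by simp⟩
    have hle : p.1 ≤ (Lo.map Prod.fst).foldr max 0 :=
      mem_le_foldr_max _ _ _ (List.mem_map_of_mem hp)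
    have : p.1 < (Lo.map Prod.fst).foldr max 0 + 1 := by linarith
    split <;> [exact this; linarith]
  | cons q0 Up' =>
    set Up := q0 :: Up' with hUp
    set b := (Up.map Prod.fst).foldr min q0.1 with hb
    have hbmem : b ∈ Up.map Prod.fst := by
      rcases foldr_min_attained (Up.map Prod.fst) q0.1 with h' | h'
      · rw [hb, h']; exact List.mem_map_of_mem (List.mem_cons_self)
      · rw [hb]; exact h'
    obtain ⟨qb, hqb, hqbv⟩ := List.mem_map.1 hbmem
    have hble : ∀ q ∈ Up, b ≤ q.1 := fun q hq =>
      mem_foldr_min_le _ _ _ (List.mem_map_of_mem hq)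
    cases Lo with
    | nil =>
      refine ⟨b - 1, by simp, fun q hq => ?_⟩
      have := hble q hq
      have : b - 1 < q.1 := by linarith
      split <;> [exact this; linarith]
    | cons p0 Lo' =>
      set Lo := p0 :: Lo' with hLo
      set a := (Lo.map Prod.fst).foldr max p0.1 with ha
      have hamem : a ∈ Lo.map Prod.fst := by
        rcases foldr_max_attained (Lo.map Prod.fst) p0.1 with h' | h'
        · rw [ha, h']; exact List.mem_map_of_mem (List.mem_cons_self)
        · rw [ha]; exact h'
      obtain ⟨pa, hpa, hpav⟩ := List.mem_map.1 hamem
      have hlea : ∀ p ∈ Lo, p.1 ≤ a := fun p hp =>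
        mem_le_foldr_max _ _ _ (List.mem_map_of_mem hp)
      have hab : a ≤ b := by
        have := h pa hpa qb hqb
        rw [hpav, hqbv] at this
        split at this <;> linarith
      rcases lt_or_eq_of_le hab with hlt | heq
      · refine ⟨(a + b) / 2, fun p hp => ?_, fun q hq => ?_⟩
        · have := hlea p hp
          have h1 : p.1 < (a + b) / 2 := by linarith
          split <;> [exact h1; linarith]
        · have := hble q hq
          have h1 : (a + b) / 2 < q.1 := by linarith
          split <;> [exact h1; linarith]
      · refine ⟨a, fun p hp => ?_, fun q hq => ?_⟩
        · have hple := hlea p hp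
          by_cases hs : p.2
          · simp only [hs, if_true]
            have := h p hp qb hqb
            rw [hqbv, ← heq] at this
            simp [hs] at this
            exact this
          · simp [hs, hple]
        · have hqle := hble q hq
          by_cases hs : q.2
          · simp only [hs, if_true]
            have := h pa hpa q hq
            rw [hpav] at this
            simp [hs] at this
            linarith [heq ▸ hqle]
          · simp [hs]; linarith [heq ▸ hqle]



theorem elim_iff (k : ℕ) (L : List DAtom) (ρ : ℕ → ℝ) :
    SysSat ρ (elim k L) ↔ ∃ r : ℝ, SysSat (Function.update ρ k r) L := by
  constructor
  · intro h
    have hkeep : ∀ a ∈ L, a.i ≠ k → a.j ≠ k → a.sat ρ := by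
      intro a ha hi hj
      exact h a (by
        apply List.mem_append_left
        apply List.mem_append_left
        simp [List.mem_filter, ha, hi, hj])
    have hdiag : ∀ a ∈ L, a.i = k → a.j = k → DAtom.sat ρ ⟨0, 0, a.s, a.c⟩ := by
      intro a ha hi hj
      exact h _ (by
        apply List.mem_append_left
        apply List.mem_append_right
        exact List.mem_map_of_mem (by simp [List.mem_filter, ha, hi, hj]))
    obtain ⟨r, hrl, hru⟩ := exists_sep
      ((L.filter (fun a => a.j = k ∧ a.i ≠ k)).map (fun a => (ρ a.i - a.c, a.s)))
      ((L.filter (fun a => a.i = k ∧ a.j ≠ k)).map (fun a => (ρ a.j + a.c, a.s)))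
      (by
        rintro p hp q hq
        obtain ⟨lo, hlo, rfl⟩ := List.mem_map.1 hp
        obtain ⟨up, hup, rfl⟩ := List.mem_map.1 hq
        have hcomb : (⟨lo.i, up.j, lo.s || up.s, lo.c + up.c⟩ : DAtom) ∈ elim k L := by
          apply List.mem_append_right
          rw [List.mem_flatMap]
          exact ⟨lo, hlo, List.mem_map.2 ⟨up, hup, rfl⟩⟩
        have hthis := h _ hcomb
        unfold DAtom.sat at hthis
        dsimp only at hthis ⊢
        push_cast at hthis
        split at hthis <;> rename_i hss <;>
          [rw [if_pos hss]; rw [if_neg hss]] <;> linarith)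
    refine ⟨r, ?_⟩
    intro a ha
    by_cases hik : a.i = k <;> by_cases hjk : a.j = k
    · have hthis := hdiag a ha hik hjk
      unfold DAtom.sat at hthis ⊢
      rw [hik, hjk]
      simp only [Function.update_self, sub_self] at hthis ⊢
      simpa using hthis
    · have hmem : (ρ a.j + a.c, a.s) ∈
          (L.filter (fun a => a.i = k ∧ a.j ≠ k)).map (fun a => (ρ a.j + a.c, a.s)) :=
        List.mem_map_of_mem (by simp [List.mem_filter, ha, hik, hjk])
      have hthis := hru _ hmem
      unfold DAtom.sat
      rw [hik, Function.update_self, Function.update_of_ne hjk]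
      dsimp only at hthis
      split at hthis <;> rename_i hss <;> [rw [if_pos hss]; rw [if_neg hss]] <;> linarith
    · have hmem : (ρ a.i - a.c, a.s) ∈
          (L.filter (fun a => a.j = k ∧ a.i ≠ k)).map (fun a => (ρ a.i - a.c, a.s)) :=
        List.mem_map_of_mem (by simp [List.mem_filter, ha, hik, hjk])
      have hthis := hrl _ hmem
      unfold DAtom.sat
      rw [hjk, Function.update_self, Function.update_of_ne hik]
      dsimp only at hthis
      split at hthis <;> rename_i hss <;> [rw [if_pos hss]; rw [if_neg hss]] <;> linarith
    · exact (sat_congr (Function.update_of_ne hik r ρ).symm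
        (Function.update_of_ne hjk r ρ).symm).1 (hkeep a ha hik hjk)
  · rintro ⟨r, hr⟩ a ha
    rcases List.mem_append.1 ha with h1 | hflat
    · rcases List.mem_append.1 h1 with hkp | hdg
      · rw [List.mem_filter] at hkp
        obtain ⟨haL, hdec⟩ := hkp
        simp only [decide_eq_true_eq] at hdec
        exact (sat_congr (Function.update_of_ne hdec.1 r ρ)
          (Function.update_of_ne hdec.2 r ρ)).1 (hr a haL)
      · obtain ⟨b, hb, hba⟩ := List.mem_map.1 hdg
        rw [List.mem_filter] at hb
        obtain ⟨hbL, hdec⟩ := hb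
        simp only [decide_eq_true_eq] at hdec
        have hthis := hr b hbL
        unfold DAtom.sat at hthis ⊢
        rw [hdec.1, hdec.2, sub_self] at hthis
        rw [← hba]
        simp only [sub_self] at hthis ⊢
        simpa using hthis
    · rw [List.mem_flatMap] at hflat
      obtain ⟨lo, hlo, hmem⟩ := hflat
      obtain ⟨up, hup, hba⟩ := List.mem_map.1 hmem
      rw [List.mem_filter] at hlo hup
      obtain ⟨hloL, hlodec⟩ := hlo
      obtain ⟨hupL, hupdec⟩ := hup
      simp only [decide_eq_true_eq] at hlodec hupdec
      have h1 := hr lo hloL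
      have h2 := hr up hupL
      unfold DAtom.sat at h1 h2 ⊢
      rw [hlodec.1, Function.update_self, Function.update_of_ne hlodec.2] at h1
      rw [hupdec.1, Function.update_self, Function.update_of_ne hupdec.2] at h2
      rw [← hba]
      dsimp only
      push_cast
      cases hls : lo.s <;> cases hus : up.s <;>
        simp only [hls, hus] at h1 h2 ⊢ <;> simp at h1 h2 ⊢ <;> linarith

end FM
namespace FM

def elimList (ks : List ℕ) (L : List DAtom) : List DAtom :=
  match ks with
  | [] => L
  | k :: ks => elimList ks (elim k L)

theorem elimList_iff (ks : List ℕ) (L : List DAtom) (ρ : ℕ → ℝ) :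
    SysSat ρ (elimList ks L) ↔ ∃ ρ' : ℕ → ℝ, (∀ i, i ∉ ks → ρ' i = ρ i) ∧ SysSat ρ' L := by
  induction ks generalizing L ρ with
  | nil =>
    constructor
    · exact fun h => ⟨ρ, fun _ _ => rfl, h⟩
    · rintro ⟨ρ', hag, h⟩
      have heq : ρ' = ρ := funext fun i => hag i List.not_mem_nil
      rwa [heq] at h
  | cons k ks ih =>
    rw [show elimList (k :: ks) L = elimList ks (elim k L) from rfl, ih]
    constructor
    · rintro ⟨ρ'', hag, hsat⟩
      rw [elim_iff] at hsat
      obtain ⟨r, hr⟩ := hsat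
      refine ⟨Function.update ρ'' k r, ?_, hr⟩
      intro i hi
      have hik : i ≠ k := fun h => hi (by rw [h]; exact List.mem_cons_self)
      rw [Function.update_of_ne hik]
      exact hag i (fun h => hi (List.mem_cons_of_mem _ h))
    · rintro ⟨ρ', hag, hsat⟩
      refine ⟨fun i => if i ∈ ks then ρ' i else ρ i, fun i hi => if_neg hi, ?_⟩
      rw [elim_iff]
      refine ⟨ρ' k, ?_⟩
      have heq : Function.update (fun i => if i ∈ ks then ρ' i else ρ i) k (ρ' k) = ρ' := by
        funext i
        by_cases hik : i = k
        · subst hik; rw [Function.update_self]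
        · rw [Function.update_of_ne hik]
          by_cases hiks : i ∈ ks
          · rw [if_pos hiks]
          · rw [if_neg hiks, hag i (by simp [hik, hiks])]
      rwa [heq]

lemma mem_elim {k : ℕ} {L : List DAtom} {a : DAtom} (ha : a ∈ elim k L) :
    (a ∈ L ∧ a.i ≠ k ∧ a.j ≠ k) ∨ (a.i = 0 ∧ a.j = 0) ∨
    (∃ lo ∈ L, ∃ up ∈ L, lo.i ≠ k ∧ up.j ≠ k ∧ a.i = lo.i ∧ a.j = up.j) := by
  rcases List.mem_append.1 ha with h1 | hflat
  · rcases List.mem_append.1 h1 with hkp | hdg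
    · rw [List.mem_filter] at hkp
      left
      refine ⟨hkp.1, ?_⟩
      have := hkp.2
      simpa using this
    · obtain ⟨b, _, hba⟩ := List.mem_map.1 hdg
      right; left
      rw [← hba]
      exact ⟨rfl, rfl⟩
  · rw [List.mem_flatMap] at hflat
    obtain ⟨lo, hlo, hmem⟩ := hflat
    obtain ⟨up, hup, hba⟩ := List.mem_map.1 hmem
    rw [List.mem_filter] at hlo hup
    have h1 := hlo.2; have h2 := hup.2
    simp only [decide_eq_true_eq] at h1 h2
    right; right
    exact ⟨lo, hlo.1, up, hup.1, h1.2, h2.2, by rw [← hba], by rw [← hba]⟩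

def WF4 (L : List DAtom) : Prop := ∀ a ∈ L, a.i ≤ 4 ∧ a.j ≤ 4

lemma elim_wf4 {k : ℕ} {L : List DAtom} (h : WF4 L) : WF4 (elim k L) := by
  intro a ha
  rcases mem_elim ha with ⟨haL, _, _⟩ | ⟨hi, hj⟩ | ⟨lo, hlo, up, hup, _, _, hi, hj⟩
  · exact h a haL
  · rw [hi, hj]; omega
  · rw [hi, hj]; exact ⟨(h lo hlo).1, (h up hup).2⟩

lemma elim_wf_of {k : ℕ} (hk4 : 4 < k) {L : List DAtom}
    (h : ∀ a ∈ L, (a.i ≤ 4 ∨ a.i = k) ∧ (a.j ≤ 4 ∨ a.j = k)) : WF4 (elim k L) := by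
  intro a ha
  rcases mem_elim ha with ⟨haL, hik, hjk⟩ | ⟨hi, hj⟩ | ⟨lo, hlo, up, hup, hik, hjk, hi, hj⟩
  · rcases h a haL with ⟨h1, h2⟩; omega
  · rw [hi, hj]; omega
  · rcases h lo hlo with ⟨h1, _⟩; rcases h up hup with ⟨_, h2⟩
    rw [hi, hj]; omega

lemma elimList_wf4 {ks : List ℕ} {L : List DAtom} (h : WF4 L) : WF4 (elimList ks L) := by
  induction ks generalizing L with
  | nil => exact h
  | cons k ks ih => exact ih (elim_wf4 h)

end FM


open FM

namespace Conv

lemma SysSat_append {ρ : ℕ → ℝ} {L₁ L₂ : List DAtom} :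
    SysSat ρ (L₁ ++ L₂) ↔ SysSat ρ L₁ ∧ SysSat ρ L₂ := by
  constructor
  · intro h
    exact ⟨fun a ha => h a (List.mem_append_left _ ha),
      fun a ha => h a (List.mem_append_right _ ha)⟩
  · rintro ⟨h₁, h₂⟩ a ha
    rcases List.mem_append.1 ha with h | h
    · exact h₁ a h
    · exact h₂ a h

noncomputable def rv (v : Val (Fin 4)) : ℕ → ℝ :=
  fun n => if h : 1 ≤ n ∧ n ≤ 4 then (v ⟨n - 1, by omega⟩ : ℝ) else 0

lemma rv_zero (v : Val (Fin 4)) : rv v 0 = 0 := by simp [rv]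

lemma rv_eq (v : Val (Fin 4)) (n : ℕ) (h1 : 1 ≤ n) (h2 : n ≤ 4) :
    rv v n = (v ⟨n - 1, by omega⟩ : ℝ) := dif_pos ⟨h1, h2⟩

lemma rv_clock (v : Val (Fin 4)) (x : Fin 4) : rv v ((x : ℕ) + 1) = (v x : ℝ) := by
  rw [rv_eq v _ (by omega) (by omega : (x:ℕ) + 1 ≤ 4)]
  congr 2

def opAtoms (i j : ℕ) (op : CmpOp) (c : ℤ) : List DAtom :=
  match op with
  | .lt => [⟨i, j, true, c⟩]
  | .le => [⟨i, j, false, c⟩]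
  | .eq => [⟨i, j, false, c⟩, ⟨j, i, false, -c⟩]
  | .ge => [⟨j, i, false, -c⟩]
  | .gt => [⟨j, i, true, -c⟩]

lemma opAtoms_iff (ρ : ℕ → ℝ) (i j : ℕ) (op : CmpOp) (c : ℤ) :
    SysSat ρ (opAtoms i j op c) ↔ op.holds (ρ i - ρ j) (c : ℝ) := by
  cases op <;>
    simp [SysSat, opAtoms, DAtom.sat, CmpOp.holds] <;>
    push_cast <;> constructor <;> intro h <;>
    first
      | linarith
      | (constructor <;> linarith)
      | (rcases h with ⟨h1, h2⟩; linarith)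

def toAtoms : ClockConstraint (Fin 4) → List DAtom
  | .tt => []
  | .single x op c => opAtoms ((x : ℕ) + 1) 0 op c
  | .diag x y op c => opAtoms ((x : ℕ) + 1) ((y : ℕ) + 1) op c
  | .conj g1 g2 => toAtoms g1 ++ toAtoms g2

lemma toAtoms_iff (v : Val (Fin 4)) (g : ClockConstraint (Fin 4)) :
    g.sat v ↔ SysSat (rv v) (toAtoms g) := by
  induction g with
  | tt => simp [ClockConstraint.sat, toAtoms, SysSat]
  | single x op c =>
    rw [show ClockConstraint.sat v (.single x op c) = op.holds (v x : ℝ) (c : ℝ) from rfl,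
      show toAtoms (.single x op c) = opAtoms ((x : ℕ) + 1) 0 op c from rfl,
      opAtoms_iff, rv_clock, rv_zero, sub_zero]
  | diag x y op c =>
    rw [show ClockConstraint.sat v (.diag x y op c)
        = op.holds ((v x : ℝ) - (v y : ℝ)) (c : ℝ) from rfl,
      show toAtoms (.diag x y op c) = opAtoms ((x : ℕ) + 1) ((y : ℕ) + 1) op c from rfl,
      opAtoms_iff, rv_clock, rv_clock]
  | conj g1 g2 ih1 ih2 =>
    rw [show ClockConstraint.sat v (.conj g1 g2) = (g1.sat v ∧ g2.sat v) from rfl,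
      show toAtoms (.conj g1 g2) = toAtoms g1 ++ toAtoms g2 from rfl,
      SysSat_append, ih1, ih2]

lemma opAtoms_wf {i j : ℕ} (hi : i ≤ 4) (hj : j ≤ 4) (op : CmpOp) (c : ℤ) :
    ∀ a ∈ opAtoms i j op c, a.i ≤ 4 ∧ a.j ≤ 4 := by
  cases op <;> simp [opAtoms] <;> omega

lemma toAtoms_wf (g : ClockConstraint (Fin 4)) : WF4 (toAtoms g) := by
  induction g with
  | tt => intro a ha; simp [toAtoms] at ha
  | single x op c =>
    exact opAtoms_wf (by have := x.isLt; omega) (by omega) op c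
  | diag x y op c =>
    exact opAtoms_wf (by have := x.isLt; omega) (by have := y.isLt; omega) op c
  | conj g1 g2 ih1 ih2 =>
    intro a ha
    rcases List.mem_append.1 ha with h | h
    · exact ih1 a h
    · exact ih2 a h

noncomputable def atomC (a : DAtom) : ClockConstraint (Fin 4) :=
  if hi : 1 ≤ a.i ∧ a.i ≤ 4 then
    if hj : 1 ≤ a.j ∧ a.j ≤ 4 then
      .diag ⟨a.i - 1, by omega⟩ ⟨a.j - 1, by omega⟩ (if a.s then .lt else .le) a.c
    else .single ⟨a.i - 1, by omega⟩ (if a.s then .lt else .le) a.c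
  else
    if hj : 1 ≤ a.j ∧ a.j ≤ 4 then
      .single ⟨a.j - 1, by omega⟩ (if a.s then .gt else .ge) (-a.c)
    else .diag 0 0 (if a.s then .lt else .le) a.c

lemma atomC_iff (v : Val (Fin 4)) (a : DAtom) (hi : a.i ≤ 4) (hj : a.j ≤ 4) :
    (atomC a).sat v ↔ a.sat (rv v) := by
  unfold atomC
  by_cases h1 : 1 ≤ a.i ∧ a.i ≤ 4 <;> by_cases h2 : 1 ≤ a.j ∧ a.j ≤ 4
  · rw [dif_pos h1, dif_pos h2]
    unfold DAtom.sat
    rw [rv_eq v a.i h1.1 h1.2, rv_eq v a.j h2.1 h2.2]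
    cases hs : a.s <;>
      simp [ClockConstraint.sat, CmpOp.holds]
  · rw [dif_pos h1, dif_neg h2]
    have hj0 : a.j = 0 := by omega
    unfold DAtom.sat
    rw [hj0, rv_zero, rv_eq v a.i h1.1 h1.2, sub_zero]
    cases hs : a.s <;>
      simp [ClockConstraint.sat, CmpOp.holds]
  · rw [dif_neg h1, dif_pos h2]
    have hi0 : a.i = 0 := by omega
    unfold DAtom.sat
    rw [hi0, rv_zero, rv_eq v a.j h2.1 h2.2, zero_sub]
    cases hs : a.s <;>
      simp [ClockConstraint.sat, CmpOp.holds] <;> push_cast <;> constructor <;>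
        intro h <;> linarith
  · rw [dif_neg h1, dif_neg h2]
    have hi0 : a.i = 0 := by omega
    have hj0 : a.j = 0 := by omega
    unfold DAtom.sat
    rw [hi0, hj0, rv_zero, sub_zero]
    cases hs : a.s <;> simp [ClockConstraint.sat, CmpOp.holds]

noncomputable def ofAtoms (L : List DAtom) : ClockConstraint (Fin 4) :=
  L.foldr (fun a g => .conj (atomC a) g) .tt

lemma ofAtoms_iff (v : Val (Fin 4)) (L : List DAtom) (h : WF4 L) :
    (ofAtoms L).sat v ↔ SysSat (rv v) L := by
  induction L with
  | nil => simp [ofAtoms, SysSat, ClockConstraint.sat]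
  | cons a L ih =>
    have ha := h a (List.mem_cons_self)
    rw [show ofAtoms (a :: L) = .conj (atomC a) (ofAtoms L) from rfl]
    rw [show ClockConstraint.sat v (.conj (atomC a) (ofAtoms L))
        = ((atomC a).sat v ∧ (ofAtoms L).sat v) from rfl]
    rw [atomC_iff v a ha.1 ha.2, ih (fun b hb => h b (List.mem_cons_of_mem _ hb))]
    constructor
    · rintro ⟨h1, h2⟩ b hb
      rcases List.mem_cons.1 hb with rfl | hb
      · exact h1
      · exact h2 b hb
    · intro hh
      exact ⟨hh a (List.mem_cons_self), fun b hb => hh b (List.mem_cons_of_mem _ hb)⟩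

end Conv

namespace ZoneOps
open FM Conv

lemma sat_iff_of_diff_eq {ρ ρ' : ℕ → ℝ} {a b : DAtom} (hs : a.s = b.s) (hc : a.c = b.c)
    (h : ρ a.i - ρ a.j = ρ' b.i - ρ' b.j) : a.sat ρ ↔ b.sat ρ' := by
  unfold DAtom.sat; rw [hs, hc, h]

lemma idx_cases (i : ℕ) (h : i ≤ 4) : i = 0 ∨ ∃ x : Fin 4, i = (x : ℕ) + 1 := by
  interval_cases i
  · exact Or.inl rfl
  · exact Or.inr ⟨⟨0, by omega⟩, rfl⟩
  · exact Or.inr ⟨⟨1, by omega⟩, rfl⟩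
  · exact Or.inr ⟨⟨2, by omega⟩, rfl⟩
  · exact Or.inr ⟨⟨3, by omega⟩, rfl⟩

def nonneg4 : List DAtom := [⟨0,1,false,0⟩, ⟨0,2,false,0⟩, ⟨0,3,false,0⟩, ⟨0,4,false,0⟩]

lemma mem_nonneg4 (x : Fin 4) : (⟨0, (x : ℕ) + 1, false, 0⟩ : DAtom) ∈ nonneg4 := by
  fin_cases x <;> simp [nonneg4]

lemma nonneg4_sat (v : Val (Fin 4)) : SysSat (rv v) nonneg4 := by
  intro a ha
  have key : ∀ x : Fin 4, DAtom.sat (rv v) ⟨0, (x : ℕ) + 1, false, 0⟩ := by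
    intro x
    unfold DAtom.sat
    simp only [if_neg (by simp : ¬(false = true))]
    rw [rv_zero, rv_clock]
    have := (v x).coe_nonneg
    push_cast
    linarith
  fin_cases ha
  · exact key ⟨0, by omega⟩
  · exact key ⟨1, by omega⟩
  · exact key ⟨2, by omega⟩
  · exact key ⟨3, by omega⟩

lemma nonneg4_wf : ∀ a ∈ nonneg4, a.i ≤ 4 ∧ a.j ≤ 4 := by
  intro a ha; fin_cases ha <;> simp

/-! ### Reset stage -/

open Classical in
noncomputable def ksY (Y : Set (Fin 4)) : List ℕ :=
  ((Finset.univ.filter (fun x => x ∈ Y)).toList).map (fun (x : Fin 4) => (x : ℕ) + 1)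

lemma zero_not_mem_ksY (Y : Set (Fin 4)) : 0 ∉ ksY Y := by
  intro h
  obtain ⟨x, _, hx⟩ := List.mem_map.1 h
  omega

lemma mem_ksY (Y : Set (Fin 4)) (x : Fin 4) : ((x : ℕ) + 1 ∈ ksY Y) ↔ x ∈ Y := by
  classical
  unfold ksY
  rw [List.mem_map]
  constructor
  · rintro ⟨y, hy, hxy⟩
    have hyx : y = x := by
      apply Fin.ext
      omega
    subst hyx
    have hmem := Finset.mem_toList.1 hy
    simpa using (Finset.mem_filter.1 hmem).2
  · intro h
    refine ⟨x, ?_, rfl⟩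
    rw [Finset.mem_toList, Finset.mem_filter]
    exact ⟨Finset.mem_univ x, by simpa using h⟩

open Classical in
noncomputable def zeroC (Y : Set (Fin 4)) : ClockConstraint (Fin 4) :=
  ((Finset.univ.filter (fun x => x ∈ Y)).toList).foldr
    (fun x g => .conj (.single x .le 0) g) .tt

end ZoneOps

namespace ZoneOps
open FM Conv

lemma zeroC_sat (Y : Set (Fin 4)) (v : Val (Fin 4)) :
    (zeroC Y).sat v ↔ ∀ x ∈ Y, v x = 0 := by
  classical
  unfold zeroC
  have key : ∀ l : List (Fin 4),
      ((l.foldr (fun x g => ClockConstraint.conj (.single x .le 0) g) .tt).sat v)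
        ↔ ∀ x ∈ l, v x = 0 := by
    intro l
    induction l with
    | nil => simp [ClockConstraint.sat]
    | cons y l ih =>
      rw [List.foldr_cons]
      constructor
      · rintro ⟨hy, hrest⟩ x hx
        rcases List.mem_cons.1 hx with rfl | hx
        · have h1 : (v x : ℝ) ≤ ((0:ℤ):ℝ) := hy
          have h2 := (v x).coe_nonneg
          have : (v x : ℝ) = 0 := by push_cast at h1; linarith
          exact_mod_cast this
        · exact ih.1 hrest x hx
      · intro h
        refine ⟨?_, ih.2 (fun x hx => h x (List.mem_cons_of_mem _ hx))⟩
        show ((v y : ℝ) ≤ ((0:ℤ):ℝ))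
        rw [h y (List.mem_cons_self)]
        push_cast
        exact le_refl 0
  refine (key _).trans ?_
  constructor
  · intro h x hx
    exact h x (Finset.mem_toList.2 (Finset.mem_filter.2 ⟨Finset.mem_univ x, by simpa using hx⟩))
  · intro h x hx
    exact h x (by simpa using (Finset.mem_filter.1 (Finset.mem_toList.1 hx)).2)

noncomputable def resetC (Y : Set (Fin 4)) (c : ClockConstraint (Fin 4)) :
    ClockConstraint (Fin 4) :=
  .conj (ofAtoms (elimList (ksY Y) (toAtoms c ++ nonneg4))) (zeroC Y)

lemma base_wf (c : ClockConstraint (Fin 4)) : WF4 (toAtoms c ++ nonneg4) := by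
  intro a ha
  rcases List.mem_append.1 ha with h | h
  · exact toAtoms_wf c a h
  · exact nonneg4_wf a h

lemma resetSet_sem (Y : Set (Fin 4)) (c : ClockConstraint (Fin 4)) :
    resetSet Y (sem c) = sem (resetC Y c) := by
  classical
  ext w
  constructor
  · rintro ⟨v, hv, rfl⟩
    show (resetC Y c).sat (resetVal Y v)
    refine ⟨?_, ?_⟩
    · rw [ofAtoms_iff _ _ (elimList_wf4 (base_wf c)), elimList_iff]
      refine ⟨rv v, ?_, ?_⟩
      · intro i hi
        by_cases h4 : i ≤ 4
        · rcases idx_cases i h4 with rfl | ⟨x, rfl⟩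
          · rw [rv_zero, rv_zero]
          · have hxY : x ∉ Y := fun hxY => hi ((mem_ksY Y x).2 hxY)
            rw [rv_clock, rv_clock]
            congr 1
            simp [resetVal, hxY]
        · unfold rv
          rw [dif_neg (by omega), dif_neg (by omega)]
      · exact SysSat_append.2 ⟨(toAtoms_iff v c).1 hv, nonneg4_sat v⟩
    · rw [zeroC_sat]
      intro x hx
      simp [resetVal, hx]
  · intro hw
    obtain ⟨h1, h2⟩ := hw
    rw [ofAtoms_iff _ _ (elimList_wf4 (base_wf c)), elimList_iff] at h1
    obtain ⟨ρ', hag, hsat⟩ := h1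
    rw [SysSat_append] at hsat
    obtain ⟨hsatc, hsatnn⟩ := hsat
    have hρ0 : ρ' 0 = 0 := by rw [hag 0 (zero_not_mem_ksY Y), rv_zero]
    have hnn : ∀ x : Fin 4, 0 ≤ ρ' ((x : ℕ) + 1) := by
      intro x
      have hx := hsatnn _ (mem_nonneg4 x)
      unfold DAtom.sat at hx
      simp only [if_neg (by simp : ¬(false = true))] at hx
      rw [hρ0] at hx
      push_cast at hx
      linarith
    set v : Val (Fin 4) := fun x => if x ∈ Y then (⟨ρ' ((x : ℕ) + 1), hnn x⟩ : NNReal) else w x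
      with hvdef
    have hrv : ∀ i ≤ 4, rv v i = ρ' i := by
      intro i h4
      rcases idx_cases i h4 with rfl | ⟨x, rfl⟩
      · rw [rv_zero, hρ0]
      · rw [rv_clock]
        by_cases hx : x ∈ Y
        · simp [hvdef, hx]; rfl
        · have hnk : (x : ℕ) + 1 ∉ ksY Y := fun h => hx ((mem_ksY Y x).1 h)
          rw [hag _ hnk, rv_clock]
          simp [hvdef, hx]
    refine ⟨v, ?_, ?_⟩
    · show c.sat v
      rw [toAtoms_iff]
      intro a ha
      have hwf := toAtoms_wf c a ha
      exact (sat_congr (hrv a.i hwf.1) (hrv a.j hwf.2)).2 (hsatc a ha)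
    · funext x
      by_cases hx : x ∈ Y
      · have hw0 : w x = 0 := (zeroC_sat Y w).1 h2 x hx
        simp [resetVal, hx, hw0]
      · simp [resetVal, hx, hvdef]

end ZoneOps

namespace ZoneOps
open FM Conv

def shiftAtom (a : DAtom) : DAtom :=
  if a.i = 0 then (if a.j = 0 then a else ⟨5, a.j, a.s, a.c⟩)
  else (if a.j = 0 then ⟨a.i, 5, a.s, a.c⟩ else a)

lemma shiftAtom_00 {a : DAtom} (h1 : a.i = 0) (h2 : a.j = 0) : shiftAtom a = a := by
  unfold shiftAtom; rw [if_pos h1, if_pos h2]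

lemma shiftAtom_0y {a : DAtom} (h1 : a.i = 0) (h2 : a.j ≠ 0) :
    shiftAtom a = ⟨5, a.j, a.s, a.c⟩ := by
  unfold shiftAtom; rw [if_pos h1, if_neg h2]

lemma shiftAtom_x0 {a : DAtom} (h1 : a.i ≠ 0) (h2 : a.j = 0) :
    shiftAtom a = ⟨a.i, 5, a.s, a.c⟩ := by
  unfold shiftAtom; rw [if_neg h1, if_pos h2]

lemma shiftAtom_xy {a : DAtom} (h1 : a.i ≠ 0) (h2 : a.j ≠ 0) : shiftAtom a = a := by
  unfold shiftAtom; rw [if_neg h1, if_neg h2]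

def deltaAtoms : List DAtom :=
  [⟨0,5,false,0⟩, ⟨5,1,false,0⟩, ⟨5,2,false,0⟩, ⟨5,3,false,0⟩, ⟨5,4,false,0⟩]

def futureList (L : List DAtom) : List DAtom :=
  elim 5 ((L.map shiftAtom) ++ deltaAtoms)

noncomputable def futureC (c : ClockConstraint (Fin 4)) : ClockConstraint (Fin 4) :=
  ofAtoms (futureList (toAtoms c))

lemma futureList_wf {L : List DAtom} (h : WF4 L) : WF4 (futureList L) := by
  apply elim_wf_of (by omega)
  intro a ha
  rcases List.mem_append.1 ha with hm | hm
  · obtain ⟨b, hb, rfl⟩ := List.mem_map.1 hm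
    have hwf := h b hb
    by_cases h1 : b.i = 0 <;> by_cases h2 : b.j = 0
    · rw [shiftAtom_00 h1 h2]; omega
    · rw [shiftAtom_0y h1 h2]; simp; omega
    · rw [shiftAtom_x0 h1 h2]; simp; omega
    · rw [shiftAtom_xy h1 h2]; omega
  · fin_cases hm <;> simp

/-- The transfer between `ρ` (with slot 5 holding `r`) and `rv v` where `v = w - r`. -/
lemma shift_transfer {ρ σ : ℕ → ℝ} {b : DAtom} (hi4 : b.i ≤ 4) (hj4 : b.j ≤ 4)
    (h0 : ρ 0 = 0) (hσ0 : σ 0 = 0)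
    (hx : ∀ x : Fin 4, ρ ((x : ℕ) + 1) = σ ((x : ℕ) + 1) + ρ 5) :
    DAtom.sat ρ (shiftAtom b) ↔ DAtom.sat σ b := by
  rcases idx_cases b.i hi4 with hi0 | ⟨x, hix⟩ <;> rcases idx_cases b.j hj4 with hj0 | ⟨y, hjy⟩
  · rw [shiftAtom_00 hi0 hj0]
    exact sat_iff_of_diff_eq rfl rfl (by rw [hi0, hj0, h0, hσ0])
  · rw [shiftAtom_0y hi0 (by omega)]
    refine sat_iff_of_diff_eq rfl rfl ?_
    show ρ 5 - ρ b.j = σ b.i - σ b.j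
    rw [hi0, hjy, hx y, hσ0]
    ring
  · rw [shiftAtom_x0 (by omega) hj0]
    refine sat_iff_of_diff_eq rfl rfl ?_
    show ρ b.i - ρ 5 = σ b.i - σ b.j
    rw [hj0, hix, hx x, hσ0]
    ring
  · rw [shiftAtom_xy (by omega) (by omega)]
    refine sat_iff_of_diff_eq rfl rfl ?_
    rw [hix, hjy, hx x, hx y]
    ring

lemma future_sem (c : ClockConstraint (Fin 4)) : future (sem c) = sem (futureC c) := by
  ext w
  constructor
  · rintro ⟨v, hv, δ, rfl⟩
    show (futureC c).sat (addVal v δ)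
    rw [futureC, ofAtoms_iff _ _ (futureList_wf (toAtoms_wf c)), futureList, elim_iff]
    refine ⟨(δ : ℝ), ?_⟩
    set ρ := Function.update (rv (addVal v δ)) 5 (δ : ℝ) with hρdef
    have hρ5 : ρ 5 = (δ : ℝ) := Function.update_self _ _ _
    have hρ0 : ρ 0 = 0 := by rw [hρdef, Function.update_of_ne (by omega), rv_zero]
    have hρx : ∀ x : Fin 4, ρ ((x : ℕ) + 1) = (rv v ((x : ℕ) + 1)) + ρ 5 := by
      intro x
      rw [hρ5, hρdef, Function.update_of_ne (by omega), rv_clock, rv_clock]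
      simp [addVal]
    intro a ha
    rcases List.mem_append.1 ha with hm | hm
    · obtain ⟨b, hb, rfl⟩ := List.mem_map.1 hm
      have hwf := toAtoms_wf c b hb
      exact (shift_transfer hwf.1 hwf.2 hρ0 (rv_zero v) hρx).2 ((toAtoms_iff v c).1 hv b hb)
    · have hd0 : (0:ℝ) ≤ (δ : ℝ) := δ.coe_nonneg
      have hg : ∀ x : Fin 4, ρ ((x : ℕ) + 1) = (v x : ℝ) + (δ : ℝ) := by
        intro x
        rw [hρx x, hρ5, rv_clock]
      have hg1 : ρ 1 = (v 0 : ℝ) + (δ : ℝ) := hg 0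
      have hg2 : ρ 2 = (v 1 : ℝ) + (δ : ℝ) := hg 1
      have hg3 : ρ 3 = (v 2 : ℝ) + (δ : ℝ) := hg 2
      have hg4 : ρ 4 = (v 3 : ℝ) + (δ : ℝ) := hg 3
      have hv0 := (v 0).coe_nonneg
      have hv1 := (v 1).coe_nonneg
      have hv2 := (v 2).coe_nonneg
      have hv3 := (v 3).coe_nonneg
      fin_cases hm <;>
        (unfold DAtom.sat
         simp only [if_neg (by simp : ¬(false = true))]
         push_cast) <;>
        [ (rw [hρ0, hρ5]; linarith)
        ; (rw [hρ5, hg1]; linarith)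
        ; (rw [hρ5, hg2]; linarith)
        ; (rw [hρ5, hg3]; linarith)
        ; (rw [hρ5, hg4]; linarith) ]
  · intro hw
    have hw' : (futureC c).sat w := hw
    rw [futureC, ofAtoms_iff _ _ (futureList_wf (toAtoms_wf c)), futureList, elim_iff] at hw'
    obtain ⟨r, hρ⟩ := hw'
    set ρ := Function.update (rv w) 5 r with hρdef
    have hρ5 : ρ 5 = r := Function.update_self _ _ _
    have hρ0 : ρ 0 = 0 := by rw [hρdef, Function.update_of_ne (by omega), rv_zero]
    have hρx : ∀ x : Fin 4, ρ ((x : ℕ) + 1) = (w x : ℝ) := by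
      intro x
      rw [hρdef, Function.update_of_ne (by omega), rv_clock]
    have hr0 : 0 ≤ r := by
      have h := hρ _ (List.mem_append_right _
        (show (⟨0,5,false,0⟩ : DAtom) ∈ deltaAtoms by simp [deltaAtoms]))
      unfold DAtom.sat at h
      simp only [if_neg (by simp : ¬(false = true))] at h
      rw [hρ0, hρ5] at h
      push_cast at h
      linarith
    have hwr : ∀ x : Fin 4, r ≤ (w x : ℝ) := by
      intro x
      have hmem : (⟨5, (x:ℕ)+1, false, 0⟩ : DAtom) ∈ deltaAtoms := by
        fin_cases x <;> simp [deltaAtoms]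
      have h := hρ _ (List.mem_append_right _ hmem)
      unfold DAtom.sat at h
      simp only [if_neg (by simp : ¬(false = true))] at h
      rw [hρ5, hρx x] at h
      push_cast at h
      linarith
    set v : Val (Fin 4) := fun x => ⟨(w x : ℝ) - r, by linarith [hwr x]⟩ with hvdef
    have hρx' : ∀ x : Fin 4, ρ ((x : ℕ) + 1) = (rv v ((x : ℕ) + 1)) + ρ 5 := by
      intro x
      rw [hρ5, hρx x, rv_clock]
      have hvx : ((v x : NNReal) : ℝ) = (w x : ℝ) - r := rfl
      show (w x : ℝ) = ((v x : NNReal) : ℝ) + r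
      rw [hvx]
      ring
    refine ⟨v, ?_, ⟨r, hr0⟩, ?_⟩
    · show c.sat v
      rw [toAtoms_iff]
      intro b hb
      have hwf := toAtoms_wf c b hb
      exact (shift_transfer hwf.1 hwf.2 hρ0 (rv_zero v) hρx').1
        (hρ _ (List.mem_append_left _ (List.mem_map_of_mem (f := shiftAtom) hb)))
    · funext x
      apply NNReal.coe_injective
      have hvx : ((v x : NNReal) : ℝ) = (w x : ℝ) - r := rfl
      show (w x : ℝ) = ((v x : NNReal) : ℝ) + r
      rw [hvx]
      ring
end ZoneOps

namespace ZoneOps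
open FM Conv

lemma sem_conj (g h : ClockConstraint (Fin 4)) : sem (.conj g h) = sem g ∩ sem h := rfl

lemma Post_eq (t : Fin 8 × ClockConstraint (Fin 4) × Set (Fin 4) × Fin 8)
    (W : Set (Val (Fin 4))) :
    Post t W = future (resetSet t.2.2.1 (W ∩ sem t.2.1)) := by
  ext w
  constructor
  · rintro ⟨v, hv, δ, hg, rfl⟩
    exact ⟨resetVal t.2.2.1 v, ⟨v, ⟨hv, hg⟩, rfl⟩, δ, rfl⟩
  · rintro ⟨u, ⟨v, ⟨hv, hg⟩, rfl⟩, δ, rfl⟩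
    exact ⟨v, hv, δ, hg, rfl⟩

theorem post_zone (t : Fin 8 × ClockConstraint (Fin 4) × Set (Fin 4) × Fin 8)
    {Z : Set (Val (Fin 4))} (h : IsZone Z) : IsZone (Post t Z) := by
  obtain ⟨g, rfl⟩ := h
  refine ⟨futureC (resetC t.2.2.1 (.conj g t.2.1)), ?_⟩
  rw [Post_eq, ← sem_conj, resetSet_sem, future_sem]

lemma Post_mono {t : Fin 8 × ClockConstraint (Fin 4) × Set (Fin 4) × Fin 8}
    {W W' : Set (Val (Fin 4))} (h : W ⊆ W') : Post t W ⊆ Post t W' := by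
  rintro w ⟨v, hv, δ, hg, rfl⟩
  exact ⟨v, h hv, δ, hg, rfl⟩

lemma Post_mem {t : Fin 8 × ClockConstraint (Fin 4) × Set (Fin 4) × Fin 8}
    {W : Set (Val (Fin 4))} {v : Val (Fin 4)} (hv : v ∈ W) (hg : t.2.1.sat v)
    (δ : NNReal) : addVal (resetVal t.2.2.1 v) δ ∈ Post t W :=
  ⟨v, hv, δ, hg, rfl⟩

lemma isZone_initZone : IsZone (initZone (Fin 4)) := by
  refine ⟨.conj (.diag 0 1 .eq 0) (.conj (.diag 1 2 .eq 0) (.diag 2 3 .eq 0)), ?_⟩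
  ext v
  constructor
  · rintro ⟨u, hu, δ, rfl⟩
    rw [Set.mem_singleton_iff] at hu
    subst hu
    refine ⟨?_, ?_, ?_⟩ <;>
      (show _ = ((0:ℤ):ℝ); simp [addVal, zeroVal])
  · rintro ⟨h1, h2, h3⟩
    have e1 : (v 0 : ℝ) = (v 1 : ℝ) := by
      have : (v 0 : ℝ) - (v 1 : ℝ) = ((0:ℤ):ℝ) := h1
      push_cast at this; linarith
    have e2 : (v 1 : ℝ) = (v 2 : ℝ) := by
      have : (v 1 : ℝ) - (v 2 : ℝ) = ((0:ℤ):ℝ) := h2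
      push_cast at this; linarith
    have e3 : (v 2 : ℝ) = (v 3 : ℝ) := by
      have : (v 2 : ℝ) - (v 3 : ℝ) = ((0:ℤ):ℝ) := h3
      push_cast at this; linarith
    refine ⟨zeroVal (Fin 4), rfl, v 0, ?_⟩
    funext x
    apply NNReal.coe_injective
    show (v x : ℝ) = ((0 : NNReal) : ℝ) + (v 0 : ℝ)
    rw [NNReal.coe_zero, zero_add]
    fin_cases x
    · rfl
    · exact e1.symm
    · (exact (e1.trans e2).symm)
    · exact ((e1.trans e2).trans e3).symm

lemma initZone_nonempty : (initZone (Fin 4)).Nonempty :=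
  ⟨zeroVal (Fin 4), zeroVal (Fin 4), rfl, 0, by
    funext x; simp [addVal, zeroVal]⟩

end ZoneOps

namespace AbugProof
open ZoneOps

def Inv : Fin 8 → Val (Fin 4) → Prop := fun q v =>
  match (q : ℕ) with
  | 0 => (v 0:ℝ) = (v 1:ℝ) ∧ (v 1:ℝ) = (v 2:ℝ) ∧ (v 2:ℝ) = (v 3:ℝ)
  | 1 => (v 0:ℝ) = (v 2:ℝ) ∧ (v 1:ℝ) = (v 3:ℝ)
  | 2 => (v 0:ℝ) - (v 1:ℝ) + ((v 3:ℝ) - (v 2:ℝ)) = 3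
  | 3 => (v 0:ℝ) - (v 1:ℝ) + ((v 3:ℝ) - (v 2:ℝ)) = 1
  | 4 => (v 0:ℝ) - (v 1:ℝ) + ((v 3:ℝ) - (v 2:ℝ)) = 1
  | 5 => (v 0:ℝ) - (v 1:ℝ) + ((v 3:ℝ) - (v 2:ℝ)) = 3
  | 6 => (v 0:ℝ) - (v 1:ℝ) + ((v 3:ℝ) - (v 2:ℝ)) = 0
  | _ => False

lemma addVal_coe (v : Val (Fin 4)) (δ : NNReal) (x : Fin 4) :
    (addVal v δ x : ℝ) = (v x : ℝ) + (δ : ℝ) := by simp [addVal]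

lemma resetVal_mem {Y : Set (Fin 4)} {v : Val (Fin 4)} {x : Fin 4} (h : x ∈ Y) :
    (resetVal Y v x : ℝ) = 0 := by simp [resetVal, h]

lemma resetVal_not_mem {Y : Set (Fin 4)} {v : Val (Fin 4)} {x : Fin 4} (h : x ∉ Y) :
    (resetVal Y v x : ℝ) = (v x : ℝ) := by simp [resetVal, h]

lemma inv_step (c c' : Fin 8 × Val (Fin 4)) (hs : Step Abug c c') (h : Inv c.1 c.2) :
    Inv c'.1 c'.2 := by
  cases hs with
  | delay q v δ =>
    show Inv q (addVal v δ)
    fin_cases q <;>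
      simp only [Inv, addVal_coe] at h ⊢ <;>
      first
        | (obtain ⟨h1, h2, h3⟩ := h; refine ⟨by linarith, by linarith, by linarith⟩)
        | (obtain ⟨h1, h2⟩ := h; refine ⟨by linarith, by linarith⟩)
        | linarith
        | exact h
  | disc ht hg =>
    rename_i q v g R q₁
    show Inv q₁ (resetVal R v)
    simp only [Abug, Set.mem_insert_iff, Set.mem_singleton_iff, Prod.mk.injEq] at ht
    have m01 : (0:Fin 4) ∈ ({0, 2} : Set (Fin 4)) := by simp
    have m21 : (2:Fin 4) ∈ ({0, 2} : Set (Fin 4)) := by simp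
    have n11 : (1:Fin 4) ∉ ({0, 2} : Set (Fin 4)) := by simp
    have n31 : (3:Fin 4) ∉ ({0, 2} : Set (Fin 4)) := by simp
    have mm1 : (1:Fin 4) ∈ ({1} : Set (Fin 4)) := by simp
    have nn0 : (0:Fin 4) ∉ ({1} : Set (Fin 4)) := by simp
    have nn2 : (2:Fin 4) ∉ ({1} : Set (Fin 4)) := by simp
    have nn3 : (3:Fin 4) ∉ ({1} : Set (Fin 4)) := by simp
    have mm0 : (0:Fin 4) ∈ ({0} : Set (Fin 4)) := by simp
    have kk1 : (1:Fin 4) ∉ ({0} : Set (Fin 4)) := by simp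
    have kk2 : (2:Fin 4) ∉ ({0} : Set (Fin 4)) := by simp
    have kk3 : (3:Fin 4) ∉ ({0} : Set (Fin 4)) := by simp
    rcases ht with ⟨hq,hg',hR,hq1⟩|⟨hq,hg',hR,hq1⟩|⟨hq,hg',hR,hq1⟩|⟨hq,hg',hR,hq1⟩|
      ⟨hq,hg',hR,hq1⟩|⟨hq,hg',hR,hq1⟩|⟨hq,hg',hR,hq1⟩|⟨hq,hg',hR,hq1⟩ <;>
      subst hq <;> subst hq1 <;> subst hg' <;> subst hR
    · -- q0 → q1, guard x3 ≤ 3, reset {x1,x3}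
      have hguard : (v 2 : ℝ) ≤ ((3:ℤ):ℝ) := hg
      obtain ⟨h1, h2, h3⟩ := h
      show Inv 1 _
      refine ⟨?_, ?_⟩ <;>
        simp only [resetVal_mem m01, resetVal_mem m21, resetVal_not_mem n11,
          resetVal_not_mem n31] <;> linarith
    · -- q1 → q2, guard x2 = 3, reset {x2}
      have hguard : (v 1 : ℝ) = ((3:ℤ):ℝ) := hg
      obtain ⟨h1, h2⟩ := h
      show Inv 2 _
      show _ = (3:ℝ)
      simp only [resetVal_mem mm1, resetVal_not_mem nn0, resetVal_not_mem nn2,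
        resetVal_not_mem nn3]
      push_cast at hguard
      linarith
    · -- q2 → q3, guard x1 = 2, reset {x1}
      have hguard : (v 0 : ℝ) = ((2:ℤ):ℝ) := hg
      have h' : _ = (3:ℝ) := h
      show Inv 3 _
      show _ = (1:ℝ)
      simp only [resetVal_mem mm0, resetVal_not_mem kk1, resetVal_not_mem kk2,
        resetVal_not_mem kk3]
      push_cast at hguard
      linarith
    · -- q3 → q2, guard x2 = 2, reset {x2}
      have hguard : (v 1 : ℝ) = ((2:ℤ):ℝ) := hg
      have h' : _ = (1:ℝ) := h
      show Inv 2 _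
      show _ = (3:ℝ)
      simp only [resetVal_mem mm1, resetVal_not_mem nn0, resetVal_not_mem nn2,
        resetVal_not_mem nn3]
      push_cast at hguard
      linarith
    · -- q2 → q4, guard x1 = 2, reset {x1}
      have hguard : (v 0 : ℝ) = ((2:ℤ):ℝ) := hg
      have h' : _ = (3:ℝ) := h
      show Inv 4 _
      show _ = (1:ℝ)
      simp only [resetVal_mem mm0, resetVal_not_mem kk1, resetVal_not_mem kk2,
        resetVal_not_mem kk3]
      push_cast at hguard
      linarith
    · -- q4 → q5, guard x2 = 2, reset {x2}
      have hguard : (v 1 : ℝ) = ((2:ℤ):ℝ) := hg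
      have h' : _ = (1:ℝ) := h
      show Inv 5 _
      show _ = (3:ℝ)
      simp only [resetVal_mem mm1, resetVal_not_mem nn0, resetVal_not_mem nn2,
        resetVal_not_mem nn3]
      push_cast at hguard
      linarith
    · -- q5 → q6, guard x1 = 3, reset {x1}
      have hguard : (v 0 : ℝ) = ((3:ℤ):ℝ) := hg
      have h' : _ = (3:ℝ) := h
      show Inv 6 _
      show _ = (0:ℝ)
      simp only [resetVal_mem mm0, resetVal_not_mem kk1, resetVal_not_mem kk2,
        resetVal_not_mem kk3]
      push_cast at hguard
      linarith
    · -- q6 → q7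
      obtain ⟨hg1, hg2⟩ := hg
      have hg1' : (v 1 : ℝ) - (v 0 : ℝ) > ((2:ℤ):ℝ) := hg1
      have hg2' : (v 3 : ℝ) - (v 2 : ℝ) < ((2:ℤ):ℝ) := hg2
      have h' : _ = (0:ℝ) := h
      show Inv 7 _
      show False
      push_cast at hg1' hg2'
      linarith

theorem not_reach7 (v : Val (Fin 4)) : ¬ Reachable Abug (7, v) := by
  intro h
  have key : ∀ c, Reachable Abug c → Inv c.1 c.2 := by
    intro c hc
    induction hc with
    | refl =>
      show Inv Abug.init (zeroVal (Fin 4))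
      show ((zeroVal (Fin 4) 0 : ℝ) = _) ∧ _
      refine ⟨rfl, rfl, rfl⟩
    | tail _ hstep ih => exact inv_step _ _ hstep ih
  exact key _ h

end AbugProof

namespace AbugProof
open ZoneOps

abbrev Trans := Fin 8 × ClockConstraint (Fin 4) × Set (Fin 4) × Fin 8

def t0 : Trans := (0, .single 2 .le 3, ({0, 2} : Set (Fin 4)), 1)
def t1 : Trans := (1, .single 1 .eq 3, ({1} : Set (Fin 4)), 2)
def t2 : Trans := (2, .single 0 .eq 2, ({0} : Set (Fin 4)), 3)
def t3 : Trans := (3, .single 1 .eq 2, ({1} : Set (Fin 4)), 2)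
def t4 : Trans := (2, .single 0 .eq 2, ({0} : Set (Fin 4)), 4)
def t5 : Trans := (4, .single 1 .eq 2, ({1} : Set (Fin 4)), 5)
def t6 : Trans := (5, .single 0 .eq 3, ({0} : Set (Fin 4)), 6)
def t7 : Trans := (6, .conj (.diag 1 0 .gt 2) (.diag 3 2 .lt 2), (∅ : Set (Fin 4)), 7)

lemma ht0 : t0 ∈ Abug.trans := by simp [Abug, t0]
lemma ht1 : t1 ∈ Abug.trans := by simp [Abug, t1]
lemma ht2 : t2 ∈ Abug.trans := by simp [Abug, t2]
lemma ht3 : t3 ∈ Abug.trans := by simp [Abug, t3]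
lemma ht4 : t4 ∈ Abug.trans := by simp [Abug, t4]
lemma ht5 : t5 ∈ Abug.trans := by simp [Abug, t5]
lemma ht6 : t6 ∈ Abug.trans := by simp [Abug, t6]
lemma ht7 : t7 ∈ Abug.trans := by simp [Abug, t7]

noncomputable def mkV (a b c d : ℝ) : Val (Fin 4) :=
  ![a.toNNReal, b.toNNReal, c.toNNReal, d.toNNReal]

lemma mkV_c0 {a b c d : ℝ} (h : 0 ≤ a) : (mkV a b c d 0 : ℝ) = a := by
  simp [mkV, Real.coe_toNNReal, h]
lemma mkV_c1 {a b c d : ℝ} (h : 0 ≤ b) : (mkV a b c d 1 : ℝ) = b := by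
  simp [mkV, Real.coe_toNNReal, h]
lemma mkV_c2 {a b c d : ℝ} (h : 0 ≤ c) : (mkV a b c d 2 : ℝ) = c := by
  simp [mkV, Real.coe_toNNReal, h]
lemma mkV_c3 {a b c d : ℝ} (h : 0 ≤ d) : (mkV a b c d 3 : ℝ) = d := by
  simp [mkV, Real.coe_toNNReal, h]

lemma val_ext {v w : Val (Fin 4)} (h : ∀ x, (v x : ℝ) = (w x : ℝ)) : v = w :=
  funext fun x => NNReal.coe_injective (h x)

/-- coordinates of `addVal (resetVal Y u) δ`. -/
lemma arv_coe (Y : Set (Fin 4)) (u : Val (Fin 4)) (δ : NNReal) (x : Fin 4) :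
    ((addVal (resetVal Y u) δ) x : ℝ) = (if x ∈ Y then 0 else (u x : ℝ)) + (δ : ℝ) := by
  by_cases h : x ∈ Y <;> simp [addVal, resetVal, h]

/-- The concrete zones reached at `q2` after `j` loop iterations. -/
def Zset (j : ℕ) : Set (Val (Fin 4)) :=
  {v | ∃ δ d : ℝ, 1 ≤ δ ∧ δ ≤ 3 ∧ 0 ≤ d ∧
    (v 0 : ℝ) = 3 - δ + d ∧ (v 1 : ℝ) = d ∧
    (v 2 : ℝ) = 3 - δ + 2*j + d ∧ (v 3 : ℝ) = 3 + 2*j + d}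

lemma Zset_mem (j : ℕ) (δ d : ℝ) (h1 : 1 ≤ δ) (h3 : δ ≤ 3) (hd : 0 ≤ d) :
    mkV (3 - δ + d) d (3 - δ + 2*j + d) (3 + 2*j + d) ∈ Zset j := by
  have hj : (0:ℝ) ≤ 2*j := by positivity
  exact ⟨δ, d, h1, h3, hd,
    mkV_c0 (by linarith), mkV_c1 hd, mkV_c2 (by linarith), mkV_c3 (by linarith)⟩

lemma Post_empty (t : Trans) : Post t (∅ : Set (Val (Fin 4))) = ∅ := by
  ext w
  constructor
  · rintro ⟨v, hv, _⟩
    exact absurd hv (Set.notMem_empty v)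
  · intro h
    exact absurd h (Set.notMem_empty w)

lemma Zset0_sub : Zset 0 ⊆ Post t1 (Post t0 (initZone (Fin 4))) := by
  rintro p ⟨δ, d, h1, h3, hd, e0, e1, e2, e3⟩
  have hδ0 : (0:ℝ) ≤ δ := by linarith
  have h3δ : (0:ℝ) ≤ 3 - δ := by linarith
  -- r = (δ,δ,δ,δ) ∈ initZone
  have hr : mkV δ δ δ δ ∈ initZone (Fin 4) := by
    refine ⟨zeroVal (Fin 4), rfl, ⟨δ, hδ0⟩, ?_⟩
    apply val_ext
    intro x
    have : ((addVal (zeroVal (Fin 4)) ⟨δ, hδ0⟩) x : ℝ) = δ := by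
      simp [addVal, zeroVal]
      exact congrArg NNReal.toReal (zero_add (⟨δ, hδ0⟩ : NNReal))
    rw [this]
    fin_cases x
    · exact mkV_c0 hδ0
    · exact mkV_c1 hδ0
    · exact mkV_c2 hδ0
    · exact mkV_c3 hδ0
  -- q = addVal (resetVal {0,2} r) (3-δ) : coords (3-δ, 3, 3-δ, 3)
  have hgr : t0.2.1.sat (mkV δ δ δ δ) := by
    show (mkV δ δ δ δ 2 : ℝ) ≤ ((3:ℤ):ℝ)
    rw [mkV_c2 hδ0]; push_cast; linarith
  have hq : addVal (resetVal t0.2.2.1 (mkV δ δ δ δ)) ⟨3 - δ, h3δ⟩ ∈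
      Post t0 (initZone (Fin 4)) := Post_mem hr hgr _
  set q := addVal (resetVal t0.2.2.1 (mkV δ δ δ δ)) ⟨3 - δ, h3δ⟩ with hqdef
  have hq0 : (q 0 : ℝ) = 3 - δ := by
    rw [hqdef, arv_coe (δ := ⟨3 - δ, h3δ⟩)]
    rw [if_pos (by simp [t0] : (0:Fin 4) ∈ t0.2.2.1)]
    show (0:ℝ) + (3 - δ) = 3 - δ
    ring
  have hq1 : (q 1 : ℝ) = 3 := by
    rw [hqdef, arv_coe (δ := ⟨3 - δ, h3δ⟩), if_neg (by simp [t0] : ¬(1:Fin 4) ∈ t0.2.2.1), mkV_c1 hδ0]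
    show δ + (3 - δ) = 3
    ring
  have hq2 : (q 2 : ℝ) = 3 - δ := by
    rw [hqdef, arv_coe (δ := ⟨3 - δ, h3δ⟩)]
    rw [if_pos (by simp [t0] : (2:Fin 4) ∈ t0.2.2.1)]
    show (0:ℝ) + (3 - δ) = 3 - δ
    ring
  have hq3 : (q 3 : ℝ) = 3 := by
    rw [hqdef, arv_coe (δ := ⟨3 - δ, h3δ⟩), if_neg (by simp [t0] : ¬(3:Fin 4) ∈ t0.2.2.1), mkV_c3 hδ0]
    show δ + (3 - δ) = 3
    ring
  have hgq : t1.2.1.sat q := by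
    show (q 1 : ℝ) = ((3:ℤ):ℝ)
    rw [hq1]; push_cast; ring
  have hdd : ((⟨d, hd⟩ : NNReal) : ℝ) = d := rfl
  have hp : p = addVal (resetVal t1.2.2.1 q) ⟨d, hd⟩ := by
    apply val_ext
    intro x
    rw [arv_coe (δ := ⟨d, hd⟩)]
    fin_cases x
    · show (p 0 : ℝ) = (if (0:Fin 4) ∈ t1.2.2.1 then 0 else (q 0 : ℝ)) + ((⟨d, hd⟩ : NNReal) : ℝ)
      rw [if_neg (by simp [t1] : ¬(0:Fin 4) ∈ t1.2.2.1), hq0, hdd, e0]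
    · show (p 1 : ℝ) = (if (1:Fin 4) ∈ t1.2.2.1 then 0 else (q 1 : ℝ)) + ((⟨d, hd⟩ : NNReal) : ℝ)
      rw [if_pos (by simp [t1] : (1:Fin 4) ∈ t1.2.2.1), hdd, e1]
      ring
    · show (p 2 : ℝ) = (if (2:Fin 4) ∈ t1.2.2.1 then 0 else (q 2 : ℝ)) + ((⟨d, hd⟩ : NNReal) : ℝ)
      rw [if_neg (by simp [t1] : ¬(2:Fin 4) ∈ t1.2.2.1), hq2, hdd, e2]
      push_cast
      ring
    · show (p 3 : ℝ) = (if (3:Fin 4) ∈ t1.2.2.1 then 0 else (q 3 : ℝ)) + ((⟨d, hd⟩ : NNReal) : ℝ)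
      rw [if_neg (by simp [t1] : ¬(3:Fin 4) ∈ t1.2.2.1), hq3, hdd, e3]
      push_cast
      ring
  rw [hp]
  exact Post_mem hq hgq _

lemma Zset_succ_sub (j : ℕ) : Zset (j+1) ⊆ Post t3 (Post t2 (Zset j)) := by
  rintro p ⟨δ, d, h1, h3, hd, e0, e1, e2, e3⟩
  have hδ0 : (0:ℝ) ≤ δ - 1 := by linarith
  have h3δ : (0:ℝ) ≤ 3 - δ := by linarith
  have hj : (0:ℝ) ≤ 2*j := by positivity
  -- r ∈ Zset j with params (δ, δ-1): coords (2, δ-1, 2+2j, 2+2j+δ)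
  have hrcoords : mkV (3 - δ + (δ-1)) (δ-1) (3 - δ + 2*j + (δ-1)) (3 + 2*j + (δ-1)) =
      mkV 2 (δ-1) (2 + 2*j) (2 + 2*j + δ) := by
    rw [show 3 - δ + (δ-1) = (2:ℝ) by ring,
      show 3 - δ + 2*(j:ℝ) + (δ-1) = 2 + 2*(j:ℝ) by ring,
      show 3 + 2*(j:ℝ) + (δ-1) = 2 + 2*(j:ℝ) + δ by ring]
  have hr : mkV 2 (δ-1) (2 + 2*j) (2 + 2*j + δ) ∈ Zset j := by
    rw [← hrcoords]
    exact Zset_mem j δ (δ-1) h1 h3 hδ0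
  have hgr : t2.2.1.sat (mkV 2 (δ-1) (2 + 2*j) (2 + 2*j + δ)) := by
    show (mkV 2 (δ-1) (2 + 2*j) (2 + 2*j + δ) 0 : ℝ) = ((2:ℤ):ℝ)
    rw [mkV_c0 (by norm_num)]; push_cast; ring
  have hq : addVal (resetVal t2.2.2.1 (mkV 2 (δ-1) (2 + 2*j) (2 + 2*j + δ))) ⟨3 - δ, h3δ⟩ ∈
      Post t2 (Zset j) := Post_mem hr hgr _
  set q := addVal (resetVal t2.2.2.1 (mkV 2 (δ-1) (2 + 2*j) (2 + 2*j + δ))) ⟨3 - δ, h3δ⟩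
    with hqdef
  have hq0 : (q 0 : ℝ) = 3 - δ := by
    rw [hqdef, arv_coe (δ := ⟨3 - δ, h3δ⟩), if_pos (by simp [t2] : (0:Fin 4) ∈ t2.2.2.1)]
    show (0:ℝ) + (3 - δ) = 3 - δ
    ring
  have hq1 : (q 1 : ℝ) = 2 := by
    rw [hqdef, arv_coe (δ := ⟨3 - δ, h3δ⟩), if_neg (by simp [t2] : ¬(1:Fin 4) ∈ t2.2.2.1),
      mkV_c1 hδ0]
    show (δ - 1) + (3 - δ) = 2
    ring
  have hq2 : (q 2 : ℝ) = 5 + 2*j - δ := by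
    rw [hqdef, arv_coe (δ := ⟨3 - δ, h3δ⟩), if_neg (by simp [t2] : ¬(2:Fin 4) ∈ t2.2.2.1),
      mkV_c2 (by linarith)]
    show (2 + 2*(j:ℝ)) + (3 - δ) = 5 + 2*j - δ
    ring
  have hq3 : (q 3 : ℝ) = 5 + 2*j := by
    rw [hqdef, arv_coe (δ := ⟨3 - δ, h3δ⟩), if_neg (by simp [t2] : ¬(3:Fin 4) ∈ t2.2.2.1),
      mkV_c3 (by linarith)]
    show (2 + 2*(j:ℝ) + δ) + (3 - δ) = 5 + 2*j
    ring
  have hgq : t3.2.1.sat q := by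
    show (q 1 : ℝ) = ((2:ℤ):ℝ)
    rw [hq1]; push_cast; ring
  have hdd : ((⟨d, hd⟩ : NNReal) : ℝ) = d := rfl
  have hp : p = addVal (resetVal t3.2.2.1 q) ⟨d, hd⟩ := by
    apply val_ext
    intro x
    rw [arv_coe (δ := ⟨d, hd⟩)]
    fin_cases x
    · show (p 0 : ℝ) = (if (0:Fin 4) ∈ t3.2.2.1 then 0 else (q 0 : ℝ)) + ((⟨d, hd⟩ : NNReal) : ℝ)
      rw [if_neg (by simp [t3] : ¬(0:Fin 4) ∈ t3.2.2.1), hq0, hdd, e0]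
    · show (p 1 : ℝ) = (if (1:Fin 4) ∈ t3.2.2.1 then 0 else (q 1 : ℝ)) + ((⟨d, hd⟩ : NNReal) : ℝ)
      rw [if_pos (by simp [t3] : (1:Fin 4) ∈ t3.2.2.1), hdd, e1]
      ring
    · show (p 2 : ℝ) = (if (2:Fin 4) ∈ t3.2.2.1 then 0 else (q 2 : ℝ)) + ((⟨d, hd⟩ : NNReal) : ℝ)
      rw [if_neg (by simp [t3] : ¬(2:Fin 4) ∈ t3.2.2.1), hq2, hdd, e2]
      push_cast
      ring
    · show (p 3 : ℝ) = (if (3:Fin 4) ∈ t3.2.2.1 then 0 else (q 3 : ℝ)) + ((⟨d, hd⟩ : NNReal) : ℝ)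
      rw [if_neg (by simp [t3] : ¬(3:Fin 4) ∈ t3.2.2.1), hq3, hdd, e3]
      push_cast
      ring
  rw [hp]
  exact Post_mem hq hgq _

end AbugProof

namespace AbugProof

lemma between_sat {u w v : Val (Fin 4)}
    (h1 : ∀ x : Fin 4, min (u x : ℝ) (w x : ℝ) ≤ (v x : ℝ) ∧
        (v x : ℝ) ≤ max (u x : ℝ) (w x : ℝ))
    (h2 : ∀ x y : Fin 4,
        min ((u x : ℝ) - (u y : ℝ)) ((w x : ℝ) - (w y : ℝ)) ≤ (v x : ℝ) - (v y : ℝ) ∧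
        (v x : ℝ) - (v y : ℝ) ≤ max ((u x : ℝ) - (u y : ℝ)) ((w x : ℝ) - (w y : ℝ)))
    (g : ClockConstraint (Fin 4)) (hu : g.sat u) (hw : g.sat w) : g.sat v := by
  induction g with
  | tt => trivial
  | single x op c =>
    obtain ⟨hl, hr⟩ := h1 x
    cases op
    · exact lt_of_le_of_lt hr (max_lt hu hw)
    · exact le_trans hr (max_le hu hw)
    · have hu' : (u x : ℝ) = (c : ℝ) := hu
      have hw' : (w x : ℝ) = (c : ℝ) := hw
      show (v x : ℝ) = (c : ℝ)
      rw [hu', hw', min_self] at hl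
      rw [hu', hw', max_self] at hr
      linarith
    · exact le_trans (le_min hu hw) hl
    · exact lt_of_lt_of_le (lt_min hu hw) hl
  | diag x y op c =>
    obtain ⟨hl, hr⟩ := h2 x y
    cases op
    · exact lt_of_le_of_lt hr (max_lt hu hw)
    · exact le_trans hr (max_le hu hw)
    · have hu' : (u x : ℝ) - (u y : ℝ) = (c : ℝ) := hu
      have hw' : (w x : ℝ) - (w y : ℝ) = (c : ℝ) := hw
      show (v x : ℝ) - (v y : ℝ) = (c : ℝ)
      rw [hu', hw', min_self] at hl
      rw [hu', hw', max_self] at hr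
      linarith
    · exact le_trans (le_min hu hw) hl
    · exact lt_of_lt_of_le (lt_min hu hw) hl
  | conj g1 g2 ih1 ih2 => exact ⟨ih1 hu.1 hw.1, ih2 hu.2 hw.2⟩

lemma between_mem {S : Set (Val (Fin 4))} (hzone : IsZone S) {u w v : Val (Fin 4)}
    (hu : u ∈ S) (hw : w ∈ S)
    (h1 : ∀ x : Fin 4, min (u x : ℝ) (w x : ℝ) ≤ (v x : ℝ) ∧
        (v x : ℝ) ≤ max (u x : ℝ) (w x : ℝ))
    (h2 : ∀ x y : Fin 4,
        min ((u x : ℝ) - (u y : ℝ)) ((w x : ℝ) - (w y : ℝ)) ≤ (v x : ℝ) - (v y : ℝ) ∧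
        (v x : ℝ) - (v y : ℝ) ≤ max ((u x : ℝ) - (u y : ℝ)) ((w x : ℝ) - (w y : ℝ))) :
    v ∈ S := by
  obtain ⟨g, rfl⟩ := hzone
  exact between_sat h1 h2 g hu hw

end AbugProof

namespace AbugProof
open ZoneOps

lemma Zset_mem' (j : ℕ) : mkV 2 0 (2 + 2*(j:ℝ)) (3 + 2*(j:ℝ)) ∈ Zset j := by
  have h := Zset_mem j 1 0 (by norm_num) (by norm_num) (le_refl 0)
  rw [show (3:ℝ) - 1 + 0 = 2 by norm_num, show (3:ℝ) - 1 + 2*(j:ℝ) + 0 = 2 + 2*(j:ℝ) by ring,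
    show (3:ℝ) + 2*(j:ℝ) + 0 = 3 + 2*(j:ℝ) by ring] at h
  exact h

lemma Zset_memw (l : ℕ) : mkV 2 2 (2 + 2*(l:ℝ)) (5 + 2*(l:ℝ)) ∈ Zset l := by
  have h := Zset_mem l 3 2 (by norm_num) (le_refl 3) (by norm_num)
  rw [show (3:ℝ) - 3 + 2 = 2 by norm_num, show (3:ℝ) - 3 + 2*(l:ℝ) + 2 = 2 + 2*(l:ℝ) by ring,
    show (3:ℝ) + 2*(l:ℝ) + 2 = 5 + 2*(l:ℝ) by ring] at h
  exact h

set_option maxHeartbeats 2000000 in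
lemma part2 :
    ∀ extra : Fin 8 → Set (Val (Fin 4)) → Set (Val (Fin 4)),
      (∀ (q : Fin 8) (Z : Set (Val (Fin 4))), IsZone Z → Z ≠ ∅ →
        IsZone (extra q Z) ∧ Z ⊆ extra q Z) →
      (∀ q : Fin 8,
        {W | ∃ Z : Set (Val (Fin 4)), IsZone Z ∧ Z ≠ ∅ ∧ W = extra q Z}.Finite) →
      ∀ N : Set (Fin 8 × Set (Val (Fin 4))),
        (∀ p ∈ N, IsZone p.2 ∧ p.2 ≠ ∅) →
        ExtraSaturated Abug extra N →
        ∃ p ∈ N, ∀ v ∈ p.2, ¬ Reachable Abug (p.1, v) := by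
  classical
  intro extra h_extra h_fin N hN hsat
  obtain ⟨hinit, hstep0⟩ := hsat
  -- the one-step lemma along the saturated set
  have hstep : ∀ t : Trans, t ∈ Abug.trans → ∀ Z, (t.1, Z) ∈ N → (Post t Z).Nonempty →
      ∃ Z', (t.2.2.2, Z') ∈ N ∧ extra t.2.2.2 (Post t Z) ⊆ Z' ∧ Post t Z ⊆ Z' := by
    intro t ht Z hmem hne
    obtain ⟨Z', h1, h2⟩ := hstep0 t.1 Z hmem t.2.1 t.2.2.1 t.2.2.2 ht
      (Set.nonempty_iff_ne_empty.1 hne)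
    have hzone := post_zone t (hN _ hmem).1
    have hsup := (h_extra t.2.2.2 (Post t Z) hzone (Set.nonempty_iff_ne_empty.1 hne)).2
    exact ⟨Z', h1, h2, hsup.trans h2⟩
  -- base of the chain
  obtain ⟨W0, hW0N, hW0sub⟩ := hinit
  have hW0 : initZone (Fin 4) ⊆ W0 :=
    ((h_extra Abug.init _ isZone_initZone
      (Set.nonempty_iff_ne_empty.1 initZone_nonempty)).2).trans hW0sub
  have hz00 : mkV 2 0 (2 + 2*((0:ℕ):ℝ)) (3 + 2*((0:ℕ):ℝ)) ∈ Zset 0 := Zset_mem' 0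
  have hP0ne : (Post t0 (initZone (Fin 4))).Nonempty := by
    by_contra hcon
    rw [Set.not_nonempty_iff_eq_empty] at hcon
    have hmem := Zset0_sub hz00
    rw [hcon, Post_empty] at hmem
    exact hmem
  obtain ⟨W1, hW1N, -, hW1sub⟩ := hstep t0 ht0 W0 hW0N (hP0ne.mono (Post_mono hW0))
  have hW1 : Post t0 (initZone (Fin 4)) ⊆ W1 := (Post_mono hW0).trans hW1sub
  have hP1ne : (Post t1 W1).Nonempty := ⟨_, (Post_mono hW1) (Zset0_sub hz00)⟩
  obtain ⟨S0, hS0N, -, hS0sub⟩ := hstep t1 ht1 W1 hW1N hP1ne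
  have hS0 : Zset 0 ⊆ S0 := Zset0_sub.trans ((Post_mono hW1).trans hS0sub)
  -- producing a q3-successor
  have mkB : ∀ (n : ℕ) (S : Set (Val (Fin 4))), (2, S) ∈ N → Zset n ⊆ S →
      ∃ B, (3, B) ∈ N ∧ Zset (n+1) ⊆ Post t3 B ∧ IsZone (Post t3 B) ∧
        (Post t3 B).Nonempty := by
    intro n S hSN hZS
    have hgpt : mkV 2 0 (2 + 2*(n:ℝ)) (3 + 2*(n:ℝ)) ∈ S := hZS (Zset_mem' n)
    have hgsat : t2.2.1.sat (mkV 2 0 (2 + 2*(n:ℝ)) (3 + 2*(n:ℝ))) := by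
      show (mkV 2 0 (2 + 2*(n:ℝ)) (3 + 2*(n:ℝ)) 0 : ℝ) = ((2:ℤ):ℝ)
      rw [mkV_c0 (by norm_num)]
      norm_num
    have hne2 : (Post t2 S).Nonempty := ⟨_, Post_mem hgpt hgsat 0⟩
    obtain ⟨B, hBN, -, hBsub⟩ := hstep t2 ht2 S hSN hne2
    have hZB : Zset (n+1) ⊆ Post t3 B :=
      (Zset_succ_sub n).trans (Post_mono ((Post_mono hZS).trans hBsub))
    exact ⟨B, hBN, hZB, post_zone t3 (hN _ hBN).1, ⟨_, hZB (Zset_mem' (n+1))⟩⟩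
  -- the chain
  let T : ℕ → Type := fun n => {SB : Set (Val (Fin 4)) × Set (Val (Fin 4)) //
    ((2, SB.1) ∈ N ∧ Zset n ⊆ SB.1) ∧ ((3, SB.2) ∈ N ∧ Zset (n+1) ⊆ Post t3 SB.2 ∧
      IsZone (Post t3 SB.2) ∧ (Post t3 SB.2).Nonempty)}
  have hkey : ∀ n (p : T n), ∃ p' : T (n+1), extra 2 (Post t3 p.1.2) ⊆ p'.1.1 := by
    intro n p
    obtain ⟨⟨S, B⟩, ⟨⟨hSN, hZS⟩, hBN, hZB, hBz, hBne⟩⟩ := p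
    obtain ⟨S', hS'N, hS'ex, hS'sub⟩ := hstep t3 ht3 B hBN hBne
    have hZS' : Zset (n+1) ⊆ S' := hZB.trans hS'sub
    obtain ⟨B', hB'N, hZB', hB'z, hB'ne⟩ := mkB (n+1) S' hS'N hZS'
    exact ⟨⟨(S', B'), ⟨hS'N, hZS'⟩, hB'N, hZB', hB'z, hB'ne⟩, hS'ex⟩
  choose F hF using hkey
  obtain ⟨B0, hB0N, hZB0, hB0z, hB0ne⟩ := mkB 0 S0 hS0N hS0
  let p0 : T 0 := ⟨(S0, B0), ⟨hS0N, hS0⟩, hB0N, hZB0, hB0z, hB0ne⟩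
  let f : ∀ n, T n := fun n => Nat.rec p0 F n
  have hfsucc : ∀ n, f (n+1) = F n (f n) := fun n => rfl
  -- the pigeonhole
  have hmaps : Set.MapsTo (fun n => extra 2 (Post t3 (f n).1.2)) Set.univ
      {W | ∃ Z : Set (Val (Fin 4)), IsZone Z ∧ Z ≠ ∅ ∧ W = extra 2 Z} := by
    intro n _
    exact ⟨Post t3 (f n).1.2, (f n).2.2.2.2.1,
      Set.nonempty_iff_ne_empty.1 (f n).2.2.2.2.2, rfl⟩
  obtain ⟨m, -, n, -, hmn, hFeq⟩ :=
    Set.infinite_univ.exists_ne_map_eq_of_mapsTo hmaps (h_fin 2)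
  -- the main argument, for m < n
  have main : ∀ m n : ℕ, m < n →
      extra 2 (Post t3 (f m).1.2) = extra 2 (Post t3 (f n).1.2) →
      ∃ p ∈ N, ∀ v ∈ p.2, ¬ Reachable Abug (p.1, v) := by
    clear hmn hFeq m n
    intro m n hmn hFeq
    have hSN : (2, (f (m+1)).1.1) ∈ N := (f (m+1)).2.1.1
    have hZm : Zset (m+1) ⊆ (f (m+1)).1.1 := (f (m+1)).2.1.2
    have hlink : extra 2 (Post t3 (f m).1.2) ⊆ (f (m+1)).1.1 := by
      rw [hfsucc m]
      exact hF m (f m)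
    have hsup : Post t3 (f n).1.2 ⊆ extra 2 (Post t3 (f n).1.2) :=
      (h_extra 2 _ (f n).2.2.2.2.1 (Set.nonempty_iff_ne_empty.1 (f n).2.2.2.2.2)).2
    have hZn : Zset (n+1) ⊆ (f (m+1)).1.1 := by
      refine (f n).2.2.2.1.trans (hsup.trans ?_)
      rw [← hFeq]
      exact hlink
    -- betweenness
    set k : ℕ := m + 1 with hkdef
    set l : ℕ := n + 1 with hldef
    have hk0 : (0:ℝ) ≤ 2*(k:ℝ) := by positivity
    have hkl : 2*(k:ℝ) + 2 ≤ 2*(l:ℝ) := by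
      have : (k:ℝ) + 1 ≤ (l:ℝ) := by
        have : k + 1 ≤ l := by omega
        exact_mod_cast this
      linarith
    set u : Val (Fin 4) := mkV 2 0 (2 + 2*(k:ℝ)) (3 + 2*(k:ℝ)) with hudef
    set w : Val (Fin 4) := mkV 2 2 (2 + 2*(l:ℝ)) (5 + 2*(l:ℝ)) with hwdef
    set v : Val (Fin 4) := mkV 2 (3/2) (7/2 + 2*(k:ℝ)) (5 + 2*(k:ℝ)) with hvdef
    have hu0 : (u 0 : ℝ) = 2 := mkV_c0 (by norm_num)
    have hu1 : (u 1 : ℝ) = 0 := mkV_c1 (le_refl 0)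
    have hu2 : (u 2 : ℝ) = 2 + 2*(k:ℝ) := mkV_c2 (by linarith)
    have hu3 : (u 3 : ℝ) = 3 + 2*(k:ℝ) := mkV_c3 (by linarith)
    have hw0 : (w 0 : ℝ) = 2 := mkV_c0 (by norm_num)
    have hw1 : (w 1 : ℝ) = 2 := mkV_c1 (by norm_num)
    have hw2 : (w 2 : ℝ) = 2 + 2*(l:ℝ) := mkV_c2 (by linarith)
    have hw3 : (w 3 : ℝ) = 5 + 2*(l:ℝ) := mkV_c3 (by linarith)
    have hv0 : (v 0 : ℝ) = 2 := mkV_c0 (by norm_num)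
    have hv1 : (v 1 : ℝ) = 3/2 := mkV_c1 (by norm_num)
    have hv2 : (v 2 : ℝ) = 7/2 + 2*(k:ℝ) := mkV_c2 (by linarith)
    have hv3 : (v 3 : ℝ) = 5 + 2*(k:ℝ) := mkV_c3 (by linarith)
    have huS : u ∈ (f (m+1)).1.1 := hZm (Zset_mem' k)
    have hwS : w ∈ (f (m+1)).1.1 := hZn (Zset_memw l)
    have h1 : ∀ x : Fin 4, min (u x : ℝ) (w x : ℝ) ≤ (v x : ℝ) ∧
        (v x : ℝ) ≤ max (u x : ℝ) (w x : ℝ) := by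
      intro x
      fin_cases x
      · show min (u 0 : ℝ) (w 0 : ℝ) ≤ (v 0 : ℝ) ∧ (v 0 : ℝ) ≤ max (u 0 : ℝ) (w 0 : ℝ)
        rw [hu0, hw0, hv0]
        refine ⟨min_le_iff.mpr ?_, le_max_iff.mpr ?_⟩ <;> first | (left; linarith) | (right; linarith)
      · show min (u 1 : ℝ) (w 1 : ℝ) ≤ (v 1 : ℝ) ∧ (v 1 : ℝ) ≤ max (u 1 : ℝ) (w 1 : ℝ)
        rw [hu1, hw1, hv1]
        refine ⟨min_le_iff.mpr ?_, le_max_iff.mpr ?_⟩ <;> first | (left; linarith) | (right; linarith)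
      · show min (u 2 : ℝ) (w 2 : ℝ) ≤ (v 2 : ℝ) ∧ (v 2 : ℝ) ≤ max (u 2 : ℝ) (w 2 : ℝ)
        rw [hu2, hw2, hv2]
        refine ⟨min_le_iff.mpr ?_, le_max_iff.mpr ?_⟩ <;> first | (left; linarith) | (right; linarith)
      · show min (u 3 : ℝ) (w 3 : ℝ) ≤ (v 3 : ℝ) ∧ (v 3 : ℝ) ≤ max (u 3 : ℝ) (w 3 : ℝ)
        rw [hu3, hw3, hv3]
        refine ⟨min_le_iff.mpr ?_, le_max_iff.mpr ?_⟩ <;> first | (left; linarith) | (right; linarith)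
    have h2 : ∀ x y : Fin 4,
        min ((u x : ℝ) - (u y : ℝ)) ((w x : ℝ) - (w y : ℝ)) ≤ (v x : ℝ) - (v y : ℝ) ∧
        (v x : ℝ) - (v y : ℝ) ≤ max ((u x : ℝ) - (u y : ℝ)) ((w x : ℝ) - (w y : ℝ)) := by
      intro x y
      fin_cases x <;> fin_cases y
      · show min ((u 0 : ℝ) - (u 0 : ℝ)) ((w 0 : ℝ) - (w 0 : ℝ)) ≤ (v 0 : ℝ) - (v 0 : ℝ) ∧
            (v 0 : ℝ) - (v 0 : ℝ) ≤ max ((u 0 : ℝ) - (u 0 : ℝ)) ((w 0 : ℝ) - (w 0 : ℝ))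
        rw [hu0, hw0, hv0]
        refine ⟨min_le_iff.mpr ?_, le_max_iff.mpr ?_⟩ <;> first | (left; linarith) | (right; linarith)
      · show min ((u 0 : ℝ) - (u 1 : ℝ)) ((w 0 : ℝ) - (w 1 : ℝ)) ≤ (v 0 : ℝ) - (v 1 : ℝ) ∧
            (v 0 : ℝ) - (v 1 : ℝ) ≤ max ((u 0 : ℝ) - (u 1 : ℝ)) ((w 0 : ℝ) - (w 1 : ℝ))
        rw [hu0, hw0, hv0, hu1, hw1, hv1]
        refine ⟨min_le_iff.mpr ?_, le_max_iff.mpr ?_⟩ <;> first | (left; linarith) | (right; linarith)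
      · show min ((u 0 : ℝ) - (u 2 : ℝ)) ((w 0 : ℝ) - (w 2 : ℝ)) ≤ (v 0 : ℝ) - (v 2 : ℝ) ∧
            (v 0 : ℝ) - (v 2 : ℝ) ≤ max ((u 0 : ℝ) - (u 2 : ℝ)) ((w 0 : ℝ) - (w 2 : ℝ))
        rw [hu0, hw0, hv0, hu2, hw2, hv2]
        refine ⟨min_le_iff.mpr ?_, le_max_iff.mpr ?_⟩ <;> first | (left; linarith) | (right; linarith)
      · show min ((u 0 : ℝ) - (u 3 : ℝ)) ((w 0 : ℝ) - (w 3 : ℝ)) ≤ (v 0 : ℝ) - (v 3 : ℝ) ∧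
            (v 0 : ℝ) - (v 3 : ℝ) ≤ max ((u 0 : ℝ) - (u 3 : ℝ)) ((w 0 : ℝ) - (w 3 : ℝ))
        rw [hu0, hw0, hv0, hu3, hw3, hv3]
        refine ⟨min_le_iff.mpr ?_, le_max_iff.mpr ?_⟩ <;> first | (left; linarith) | (right; linarith)
      · show min ((u 1 : ℝ) - (u 0 : ℝ)) ((w 1 : ℝ) - (w 0 : ℝ)) ≤ (v 1 : ℝ) - (v 0 : ℝ) ∧
            (v 1 : ℝ) - (v 0 : ℝ) ≤ max ((u 1 : ℝ) - (u 0 : ℝ)) ((w 1 : ℝ) - (w 0 : ℝ))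
        rw [hu1, hw1, hv1, hu0, hw0, hv0]
        refine ⟨min_le_iff.mpr ?_, le_max_iff.mpr ?_⟩ <;> first | (left; linarith) | (right; linarith)
      · show min ((u 1 : ℝ) - (u 1 : ℝ)) ((w 1 : ℝ) - (w 1 : ℝ)) ≤ (v 1 : ℝ) - (v 1 : ℝ) ∧
            (v 1 : ℝ) - (v 1 : ℝ) ≤ max ((u 1 : ℝ) - (u 1 : ℝ)) ((w 1 : ℝ) - (w 1 : ℝ))
        rw [hu1, hw1, hv1]
        refine ⟨min_le_iff.mpr ?_, le_max_iff.mpr ?_⟩ <;> first | (left; linarith) | (right; linarith)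
      · show min ((u 1 : ℝ) - (u 2 : ℝ)) ((w 1 : ℝ) - (w 2 : ℝ)) ≤ (v 1 : ℝ) - (v 2 : ℝ) ∧
            (v 1 : ℝ) - (v 2 : ℝ) ≤ max ((u 1 : ℝ) - (u 2 : ℝ)) ((w 1 : ℝ) - (w 2 : ℝ))
        rw [hu1, hw1, hv1, hu2, hw2, hv2]
        refine ⟨min_le_iff.mpr ?_, le_max_iff.mpr ?_⟩ <;> first | (left; linarith) | (right; linarith)
      · show min ((u 1 : ℝ) - (u 3 : ℝ)) ((w 1 : ℝ) - (w 3 : ℝ)) ≤ (v 1 : ℝ) - (v 3 : ℝ) ∧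
            (v 1 : ℝ) - (v 3 : ℝ) ≤ max ((u 1 : ℝ) - (u 3 : ℝ)) ((w 1 : ℝ) - (w 3 : ℝ))
        rw [hu1, hw1, hv1, hu3, hw3, hv3]
        refine ⟨min_le_iff.mpr ?_, le_max_iff.mpr ?_⟩ <;> first | (left; linarith) | (right; linarith)
      · show min ((u 2 : ℝ) - (u 0 : ℝ)) ((w 2 : ℝ) - (w 0 : ℝ)) ≤ (v 2 : ℝ) - (v 0 : ℝ) ∧
            (v 2 : ℝ) - (v 0 : ℝ) ≤ max ((u 2 : ℝ) - (u 0 : ℝ)) ((w 2 : ℝ) - (w 0 : ℝ))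
        rw [hu2, hw2, hv2, hu0, hw0, hv0]
        refine ⟨min_le_iff.mpr ?_, le_max_iff.mpr ?_⟩ <;> first | (left; linarith) | (right; linarith)
      · show min ((u 2 : ℝ) - (u 1 : ℝ)) ((w 2 : ℝ) - (w 1 : ℝ)) ≤ (v 2 : ℝ) - (v 1 : ℝ) ∧
            (v 2 : ℝ) - (v 1 : ℝ) ≤ max ((u 2 : ℝ) - (u 1 : ℝ)) ((w 2 : ℝ) - (w 1 : ℝ))
        rw [hu2, hw2, hv2, hu1, hw1, hv1]
        refine ⟨min_le_iff.mpr ?_, le_max_iff.mpr ?_⟩ <;> first | (left; linarith) | (right; linarith)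
      · show min ((u 2 : ℝ) - (u 2 : ℝ)) ((w 2 : ℝ) - (w 2 : ℝ)) ≤ (v 2 : ℝ) - (v 2 : ℝ) ∧
            (v 2 : ℝ) - (v 2 : ℝ) ≤ max ((u 2 : ℝ) - (u 2 : ℝ)) ((w 2 : ℝ) - (w 2 : ℝ))
        rw [hu2, hw2, hv2]
        refine ⟨min_le_iff.mpr ?_, le_max_iff.mpr ?_⟩ <;> first | (left; linarith) | (right; linarith)
      · show min ((u 2 : ℝ) - (u 3 : ℝ)) ((w 2 : ℝ) - (w 3 : ℝ)) ≤ (v 2 : ℝ) - (v 3 : ℝ) ∧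
            (v 2 : ℝ) - (v 3 : ℝ) ≤ max ((u 2 : ℝ) - (u 3 : ℝ)) ((w 2 : ℝ) - (w 3 : ℝ))
        rw [hu2, hw2, hv2, hu3, hw3, hv3]
        refine ⟨min_le_iff.mpr ?_, le_max_iff.mpr ?_⟩ <;> first | (left; linarith) | (right; linarith)
      · show min ((u 3 : ℝ) - (u 0 : ℝ)) ((w 3 : ℝ) - (w 0 : ℝ)) ≤ (v 3 : ℝ) - (v 0 : ℝ) ∧
            (v 3 : ℝ) - (v 0 : ℝ) ≤ max ((u 3 : ℝ) - (u 0 : ℝ)) ((w 3 : ℝ) - (w 0 : ℝ))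
        rw [hu3, hw3, hv3, hu0, hw0, hv0]
        refine ⟨min_le_iff.mpr ?_, le_max_iff.mpr ?_⟩ <;> first | (left; linarith) | (right; linarith)
      · show min ((u 3 : ℝ) - (u 1 : ℝ)) ((w 3 : ℝ) - (w 1 : ℝ)) ≤ (v 3 : ℝ) - (v 1 : ℝ) ∧
            (v 3 : ℝ) - (v 1 : ℝ) ≤ max ((u 3 : ℝ) - (u 1 : ℝ)) ((w 3 : ℝ) - (w 1 : ℝ))
        rw [hu3, hw3, hv3, hu1, hw1, hv1]
        refine ⟨min_le_iff.mpr ?_, le_max_iff.mpr ?_⟩ <;> first | (left; linarith) | (right; linarith)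
      · show min ((u 3 : ℝ) - (u 2 : ℝ)) ((w 3 : ℝ) - (w 2 : ℝ)) ≤ (v 3 : ℝ) - (v 2 : ℝ) ∧
            (v 3 : ℝ) - (v 2 : ℝ) ≤ max ((u 3 : ℝ) - (u 2 : ℝ)) ((w 3 : ℝ) - (w 2 : ℝ))
        rw [hu3, hw3, hv3, hu2, hw2, hv2]
        refine ⟨min_le_iff.mpr ?_, le_max_iff.mpr ?_⟩ <;> first | (left; linarith) | (right; linarith)
      · show min ((u 3 : ℝ) - (u 3 : ℝ)) ((w 3 : ℝ) - (w 3 : ℝ)) ≤ (v 3 : ℝ) - (v 3 : ℝ) ∧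
            (v 3 : ℝ) - (v 3 : ℝ) ≤ max ((u 3 : ℝ) - (u 3 : ℝ)) ((w 3 : ℝ) - (w 3 : ℝ))
        rw [hu3, hw3, hv3]
        refine ⟨min_le_iff.mpr ?_, le_max_iff.mpr ?_⟩ <;> first | (left; linarith) | (right; linarith)
    have hvS : v ∈ (f (m+1)).1.1 := between_mem (hN _ hSN).1 huS hwS h1 h2
    -- fire the path q2 → q4 → q5 → q6 → q7
    have gt4 : t4.2.1.sat v := by
      show (v 0 : ℝ) = ((2:ℤ):ℝ)
      rw [hv0]; norm_num
    obtain ⟨S4, hS4N, -, hS4sub⟩ := hstep t4 ht4 _ hSN ⟨_, Post_mem hvS gt4 0⟩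
    set half : NNReal := ⟨1/2, by norm_num⟩ with hhalfdef
    have hhalf : (half : ℝ) = 1/2 := rfl
    set p4 := addVal (resetVal t4.2.2.1 v) half with hp4def
    have hp4 : p4 ∈ S4 := hS4sub (Post_mem hvS gt4 half)
    have hp40 : (p4 0 : ℝ) = 1/2 := by
      rw [hp4def, arv_coe, if_pos (by simp [t4] : (0:Fin 4) ∈ t4.2.2.1), hhalf]; norm_num
    have hp41 : (p4 1 : ℝ) = 2 := by
      rw [hp4def, arv_coe, if_neg (by simp [t4] : ¬(1:Fin 4) ∈ t4.2.2.1), hv1, hhalf]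
      norm_num
    have hp42 : (p4 2 : ℝ) = 4 + 2*(k:ℝ) := by
      rw [hp4def, arv_coe, if_neg (by simp [t4] : ¬(2:Fin 4) ∈ t4.2.2.1), hv2, hhalf]
      ring
    have hp43 : (p4 3 : ℝ) = 11/2 + 2*(k:ℝ) := by
      rw [hp4def, arv_coe, if_neg (by simp [t4] : ¬(3:Fin 4) ∈ t4.2.2.1), hv3, hhalf]
      ring
    have gt5 : t5.2.1.sat p4 := by
      show (p4 1 : ℝ) = ((2:ℤ):ℝ)
      rw [hp41]; norm_num
    obtain ⟨S5, hS5N, -, hS5sub⟩ := hstep t5 ht5 _ hS4N ⟨_, Post_mem hp4 gt5 0⟩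
    set fh : NNReal := ⟨5/2, by norm_num⟩ with hfhdef
    have hfh : (fh : ℝ) = 5/2 := rfl
    set p5 := addVal (resetVal t5.2.2.1 p4) fh with hp5def
    have hp5 : p5 ∈ S5 := hS5sub (Post_mem hp4 gt5 fh)
    have hp50 : (p5 0 : ℝ) = 3 := by
      rw [hp5def, arv_coe, if_neg (by simp [t5] : ¬(0:Fin 4) ∈ t5.2.2.1), hp40, hfh]
      norm_num
    have hp51 : (p5 1 : ℝ) = 5/2 := by
      rw [hp5def, arv_coe, if_pos (by simp [t5] : (1:Fin 4) ∈ t5.2.2.1), hfh]; norm_num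
    have hp52 : (p5 2 : ℝ) = 13/2 + 2*(k:ℝ) := by
      rw [hp5def, arv_coe, if_neg (by simp [t5] : ¬(2:Fin 4) ∈ t5.2.2.1), hp42, hfh]
      ring
    have hp53 : (p5 3 : ℝ) = 8 + 2*(k:ℝ) := by
      rw [hp5def, arv_coe, if_neg (by simp [t5] : ¬(3:Fin 4) ∈ t5.2.2.1), hp43, hfh]
      ring
    have gt6 : t6.2.1.sat p5 := by
      show (p5 0 : ℝ) = ((3:ℤ):ℝ)
      rw [hp50]; norm_num
    obtain ⟨S6, hS6N, -, hS6sub⟩ := hstep t6 ht6 _ hS5N ⟨_, Post_mem hp5 gt6 0⟩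
    set p6 := addVal (resetVal t6.2.2.1 p5) 0 with hp6def
    have hp6 : p6 ∈ S6 := hS6sub (Post_mem hp5 gt6 0)
    have hz : ((0 : NNReal) : ℝ) = 0 := rfl
    have hp60 : (p6 0 : ℝ) = 0 := by
      rw [hp6def, arv_coe, if_pos (by simp [t6] : (0:Fin 4) ∈ t6.2.2.1), hz]; norm_num
    have hp61 : (p6 1 : ℝ) = 5/2 := by
      rw [hp6def, arv_coe, if_neg (by simp [t6] : ¬(1:Fin 4) ∈ t6.2.2.1), hp51, hz]
      norm_num
    have hp62 : (p6 2 : ℝ) = 13/2 + 2*(k:ℝ) := by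
      rw [hp6def, arv_coe, if_neg (by simp [t6] : ¬(2:Fin 4) ∈ t6.2.2.1), hp52, hz]
      ring
    have hp63 : (p6 3 : ℝ) = 8 + 2*(k:ℝ) := by
      rw [hp6def, arv_coe, if_neg (by simp [t6] : ¬(3:Fin 4) ∈ t6.2.2.1), hp53, hz]
      ring
    have gt7 : t7.2.1.sat p6 := by
      refine ⟨?_, ?_⟩
      · show (p6 1 : ℝ) - (p6 0 : ℝ) > ((2:ℤ):ℝ)
        rw [hp61, hp60]; norm_num
      · show (p6 3 : ℝ) - (p6 2 : ℝ) < ((2:ℤ):ℝ)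
        rw [hp63, hp62]; push_cast; linarith
    obtain ⟨S7, hS7N, -, -⟩ := hstep t7 ht7 _ hS6N ⟨_, Post_mem hp6 gt7 0⟩
    exact ⟨(7, S7), hS7N, fun v _ => not_reach7 v⟩
  rcases hmn.lt_or_gt with h | h
  · exact main m n h hFeq
  · exact main n m h hFeq.symm

end AbugProof

/-- `q7` is unreachable in `A_bug`, and every saturated set of any
finite-range extrapolation on `A_bug` fails soundness. -/
theorem no_sound_finite_extrapolation_for_Abug :
    (∀ v : Val (Fin 4), ¬ Reachable Abug (7, v)) ∧
    (∀ extra : Fin 8 → Set (Val (Fin 4)) → Set (Val (Fin 4)),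
      (∀ (q : Fin 8) (Z : Set (Val (Fin 4))), IsZone Z → Z ≠ ∅ →
        IsZone (extra q Z) ∧ Z ⊆ extra q Z) →
      (∀ q : Fin 8,
        {W | ∃ Z : Set (Val (Fin 4)), IsZone Z ∧ Z ≠ ∅ ∧ W = extra q Z}.Finite) →
      ∀ N : Set (Fin 8 × Set (Val (Fin 4))),
        (∀ p ∈ N, IsZone p.2 ∧ p.2 ≠ ∅) →
        ExtraSaturated Abug extra N →
        ∃ p ∈ N, ∀ v ∈ p.2, ¬ Reachable Abug (p.1, v)) :=
  ⟨fun v => AbugProof.not_reach7 v, AbugProof.part2⟩
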